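/- arXiv:2205.08753 — 9 statements merged into one kernel-verified Lean document; each statement's English description precedes it below -/
import Mathlib

section
/- Let I ⊆ ℝ be a nonempty open interval and let F, G : I → ℂ be analytic (complex-valued real-analytic) functions on I. If |F(x)|² = |G(x)|² for all x ∈ I and F′(x)·conj(F(x)) = G′(x)·conj(G(x)) for all x ∈ I, then there exists λ ∈ ℂ with |λ| = 1 such that G(x) = λ·F(x) for all x ∈ I. -/
open Set

theorem uniqueness_from_modulus_and_Fprime_conjF
    (a b : ℝ) (hab : a < b) (F G : ℝ → ℂ)
    (hF : AnalyticOnNhd ℝ F (Ioo a b)) (hG : AnalyticOnNhd ℝ G (Ioo a b))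
    (hmod : ∀ x ∈ Ioo a b, ‖F x‖ ^ 2 = ‖G x‖ ^ 2)
    (hder : ∀ x ∈ Ioo a b,
      deriv F x * (starRingEnd ℂ) (F x) = deriv G x * (starRingEnd ℂ) (G x)) :
    ∃ l : ℂ, ‖l‖ = 1 ∧ ∀ x ∈ Ioo a b, G x = l * F x := by
  -- consequence of hmod: F x * conj (F x) = G x * conj (G x)
  have hmc : ∀ x ∈ Ioo a b, F x * (starRingEnd ℂ) (F x) = G x * (starRingEnd ℂ) (G x) := by
    intro x hx
    have h := hmod x hx
    rw [Complex.sq_norm, Complex.sq_norm] at h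
    rw [Complex.mul_conj, Complex.mul_conj, h]
  by_cases hF0 : ∀ x ∈ Ioo a b, F x = 0
  · refine ⟨1, by simp, fun x hx => ?_⟩
    have h1 := hmod x hx
    rw [hF0 x hx] at h1 ⊢
    have : ‖G x‖ = 0 := by simpa using h1.symm
    simp [norm_eq_zero.mp this]
  · push_neg at hF0
    obtain ⟨x₀, hx₀, hFx₀⟩ := hF0
    -- Wronskian vanishes where F ≠ 0
    have key : ∀ x ∈ Ioo a b, F x ≠ 0 → deriv G x * F x = deriv F x * G x := by
      intro x hx hFx
      have h1 := hder x hx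
      have h2 := hmc x hx
      have hc : (starRingEnd ℂ) (F x) ≠ 0 := by simpa using hFx
      have h3 : (deriv G x * F x - deriv F x * G x) * (starRingEnd ℂ) (F x) = 0 := by
        linear_combination deriv G x * h2 - G x * h1
      exact sub_eq_zero.mp ((mul_eq_zero.mp h3).resolve_right hc)
    set l : ℂ := G x₀ / F x₀ with hl
    have habs : ‖F x₀‖ = ‖G x₀‖ :=
      (sq_eq_sq₀ (norm_nonneg _) (norm_nonneg _)).mp (hmod x₀ hx₀)
    have hlabs : ‖l‖ = 1 := by
      rw [hl, norm_div, ← habs, div_self]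
      simpa using hFx₀
    -- find a ball around x₀ contained in Ioo a b where F ≠ 0
    have hev : ∀ᶠ x in nhds x₀, x ∈ Ioo a b ∧ F x ≠ 0 := by
      have h1 : ∀ᶠ x in nhds x₀, x ∈ Ioo a b :=
        isOpen_Ioo.mem_nhds hx₀
      have h2 : ∀ᶠ x in nhds x₀, F x ≠ 0 :=
        (hF x₀ hx₀).continuousAt.eventually_ne hFx₀
      exact h1.and h2
    obtain ⟨ε, hε, hball⟩ := Metric.eventually_nhds_iff_ball.mp hev
    -- the quotient w = G / F has zero derivative on the ball
    have hderiv0 : ∀ x ∈ Metric.ball x₀ ε, deriv (fun y => G y / F y) x = 0 := by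
      intro x hx
      obtain ⟨hxI, hxF⟩ := hball x hx
      have dF : DifferentiableAt ℝ F x := (hF x hxI).differentiableAt
      have dG : DifferentiableAt ℝ G x := (hG x hxI).differentiableAt
      rw [deriv_fun_div dG dF hxF, div_eq_zero_iff]
      left
      linear_combination key x hxI hxF
    have hdiff : DifferentiableOn ℝ (fun y => G y / F y) (Metric.ball x₀ ε) := by
      intro x hx
      obtain ⟨hxI, hxF⟩ := hball x hx
      exact (((hG x hxI).differentiableAt.div (hF x hxI).differentiableAt hxF)).differentiableWithinAt
    -- hence w is constant on the ball
    have hconst : ∀ x ∈ Metric.ball x₀ ε, G x / F x = l := by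
      intro x hx
      have := (convex_ball x₀ ε).is_const_of_fderivWithin_eq_zero hdiff
        (fun y hy => by
          rw [fderivWithin_of_isOpen Metric.isOpen_ball hy, ← toSpanSingleton_deriv,
            hderiv0 y hy]
          exact ContinuousLinearMap.ext fun v => by simp)
        hx (Metric.mem_ball_self hε)
      simpa [hl] using this
    -- eventual equality G = l * F near x₀
    have hev2 : G =ᶠ[nhds x₀] fun x => l * F x := by
      filter_upwards [Metric.ball_mem_nhds x₀ hε] with x hx
      have hxF := (hball x hx).2
      have := hconst x hx
      rw [div_eq_iff hxF] at this
      exact this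
    -- identity theorem
    have hGl : AnalyticOnNhd ℝ (fun x => l * F x) (Ioo a b) :=
      fun x hx => (analyticAt_const).mul (hF x hx)
    exact ⟨l, hlabs, fun x hx =>
      hG.eqOn_of_preconnected_of_eventuallyEq hGl isPreconnected_Ioo hx₀ hev2 hx⟩
end

section
/- Let D ⊆ ℂ be a nonempty open disk whose center lies on the real axis, and let h be holomorphic on D. Suppose that for every real x ∈ D ∩ ℝ one has Re(h(x)) = 0 and the derivative at y = 0 of the real-valued function y ↦ Re(h(x + iy)) vanishes. Then there exists a ∈ ℝ such that h(z) = i·a for all z ∈ D. -/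
open Metric

theorem holomorphic_const_of_re_and_normal_deriv_vanish
    (x₀ r : ℝ) (hr : 0 < r) (h : ℂ → ℂ)
    (hhol : DifferentiableOn ℂ h (ball (x₀ : ℂ) r))
    (hre : ∀ x : ℝ, (x : ℂ) ∈ ball (x₀ : ℂ) r → (h x).re = 0)
    (hdy : ∀ x : ℝ, (x : ℂ) ∈ ball (x₀ : ℂ) r →
      deriv (fun y : ℝ => (h (x + y * Complex.I)).re) 0 = 0) :
    ∃ a : ℝ, ∀ z ∈ ball (x₀ : ℂ) r, h z = Complex.I * a := by
  have hopen : IsOpen (ball (x₀ : ℂ) r) := isOpen_ball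
  have han : AnalyticOnNhd ℂ h (ball (x₀ : ℂ) r) :=
    hhol.analyticOnNhd hopen
  have hdiff : ∀ z ∈ ball (x₀ : ℂ) r, DifferentiableAt ℂ h z := fun z hz =>
    hhol.differentiableAt (hopen.mem_nhds hz)
  -- deriv h vanishes at real points of the ball
  have hderiv0 : ∀ x : ℝ, (x : ℂ) ∈ ball (x₀ : ℂ) r → deriv h x = 0 := by
    intro x hx
    have hd : HasDerivAt h (deriv h x) x := (hdiff _ hx).hasDerivAt
    -- real direction
    have he1 : HasDerivAt (fun w : ℂ => h ((x : ℂ) + w)) (deriv h x) 0 := by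
      have hin : HasDerivAt (fun w : ℂ => (x : ℂ) + w) 1 0 :=
        (hasDerivAt_id (0 : ℂ)).const_add (x : ℂ)
      have hd' : HasDerivAt h (deriv h x) ((fun w : ℂ => (x : ℂ) + w) 0) := by
        simpa using hd
      simpa [Function.comp_def] using HasDerivAt.comp (0 : ℂ) hd' hin
    have hre1 : HasDerivAt (fun t : ℝ => (h ((x : ℂ) + (t : ℝ))).re)
        ((deriv h x).re) 0 := by
      simpa using he1.real_of_complex
    -- this function vanishes near 0
    have hzero : ∀ᶠ t : ℝ in nhds 0, (h ((x : ℂ) + (t : ℝ))).re = 0 := by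
      have hc : Continuous fun t : ℝ => (x : ℂ) + (t : ℝ) := by continuity
      have hmem : ∀ᶠ t : ℝ in nhds 0, ((x : ℂ) + (t : ℝ)) ∈ ball (x₀ : ℂ) r := by
        have := hc.continuousAt (x := (0 : ℝ))
        exact this.preimage_mem_nhds (by simpa using hopen.mem_nhds hx)
      filter_upwards [hmem] with t ht
      have h2 : ((x + t : ℝ) : ℂ) ∈ ball (x₀ : ℂ) r := by push_cast; exact ht
      have := hre (x + t) h2
      push_cast at this
      exact this
    have hdz : deriv (fun t : ℝ => (h ((x : ℂ) + (t : ℝ))).re) 0 = 0 := by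
      have heq : (fun t : ℝ => (h ((x : ℂ) + (t : ℝ))).re) =ᶠ[nhds (0:ℝ)]
          (fun _ => 0) := hzero
      rw [heq.deriv_eq]; simp
    have hRe : (deriv h x).re = 0 := by rw [← hre1.deriv]; exact hdz
    -- imaginary direction
    have he2 : HasDerivAt (fun w : ℂ => h ((x : ℂ) + w * Complex.I))
        (deriv h x * Complex.I) 0 := by
      have hin : HasDerivAt (fun w : ℂ => (x : ℂ) + w * Complex.I) Complex.I 0 := by
        simpa using ((hasDerivAt_id (0 : ℂ)).mul_const Complex.I).const_add (x : ℂ)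
      have hd' : HasDerivAt h (deriv h x)
          ((fun w : ℂ => (x : ℂ) + w * Complex.I) 0) := by simpa using hd
      simpa [Function.comp_def] using HasDerivAt.comp (0 : ℂ) hd' hin
    have hre2 : HasDerivAt (fun y : ℝ => (h ((x : ℂ) + (y : ℝ) * Complex.I)).re)
        ((deriv h x * Complex.I).re) 0 := by
      simpa using he2.real_of_complex
    have hIm : (deriv h x * Complex.I).re = 0 := by
      rw [← hre2.deriv]; exact hdy x hx
    simp [Complex.mul_re] at hIm
    exact Complex.ext hRe (by simpa using hIm)
  -- identity theorem : deriv h = 0 on the ball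
  have hx₀ : (x₀ : ℂ) ∈ ball (x₀ : ℂ) r := by simpa using hr
  have hfreq : ∃ᶠ z in nhdsWithin (x₀ : ℂ) {(x₀:ℂ)}ᶜ, deriv h z = 0 := by
    have hc : Continuous fun t : ℝ => ((x₀ + t : ℝ) : ℂ) := by continuity
    have htend : Filter.Tendsto (fun t : ℝ => ((x₀ + t : ℝ) : ℂ))
        (nhdsWithin 0 {(0:ℝ)}ᶜ) (nhdsWithin (x₀ : ℂ) {(x₀:ℂ)}ᶜ) := by
      apply Filter.Tendsto.inf
      · have := hc.tendsto 0
        simpa using this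
      · apply Filter.tendsto_principal_principal.2
        intro t ht
        simp only [Set.mem_compl_iff, Set.mem_singleton_iff] at ht ⊢
        intro hcon
        apply ht
        have := Complex.ofReal_injective hcon
        linarith
    apply htend.frequently
    have hev : ∀ᶠ t in nhdsWithin (0:ℝ) {(0:ℝ)}ᶜ,
        deriv h ((x₀ + t : ℝ) : ℂ) = 0 := by
      apply Filter.Eventually.filter_mono nhdsWithin_le_nhds
      have hmem : ∀ᶠ t : ℝ in nhds 0, ((x₀ + t : ℝ) : ℂ) ∈ ball (x₀ : ℂ) r :=
        hc.continuousAt.preimage_mem_nhds (by simpa using hopen.mem_nhds hx₀)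
      filter_upwards [hmem] with t ht
      exact hderiv0 _ ht
    exact hev.frequently
  have hderivan : AnalyticOnNhd ℂ (deriv h) (ball (x₀ : ℂ) r) := han.deriv
  have hzero : Set.EqOn (deriv h) 0 (ball (x₀ : ℂ) r) :=
    hderivan.eqOn_zero_of_preconnected_of_frequently_eq_zero
      (convex_ball _ _).isPreconnected hx₀ hfreq
  -- h is constant on the ball
  have hconst : ∀ z ∈ ball (x₀ : ℂ) r, h z = h (x₀ : ℂ) := by
    intro z hz
    apply (convex_ball (x₀:ℂ) r).is_const_of_fderivWithin_eq_zero hhol _ hz hx₀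
    intro w hw
    have hdz : HasDerivAt h 0 w := by
      have := (hdiff w hw).hasDerivAt
      rwa [hzero hw] at this
    have hfd : fderiv ℂ h w = 0 := by
      have := hdz.hasFDerivAt.fderiv
      rw [this]; ext1; simp
    rw [fderivWithin_eq_fderiv (hopen.uniqueDiffOn w hw) (hdiff w hw)]
    exact hfd
  refine ⟨(h (x₀ : ℂ)).im, fun z hz => ?_⟩
  rw [hconst z hz]
  have := hre x₀ hx₀
  apply Complex.ext <;> simp [this]
end

section
/- Let U ⊆ ℂ be an open set containing the real line and let F, G be holomorphic on U. Assume that for every x ∈ ℝ, |F(x)| = |G(x)| and |F′(x)| = |G′(x)|. Then there exists c ∈ ℂ with |c| = 1 such that either G(x) = c·F(x) for all x ∈ ℝ, or G(x) = c·conj(F(x)) for all x ∈ ℝ. -/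
open Complex Set

/-- If `v' * u = v * u'` everywhere on `ℝ`, with `u, v` real-analytic and `u x₀ ≠ 0`,
then `v = (v x₀ / u x₀) * u` everywhere. -/
lemma aux_prop_const {u v u' v' : ℝ → ℂ}
    (huA : AnalyticOnNhd ℝ u Set.univ) (hvA : AnalyticOnNhd ℝ v Set.univ)
    (hu : ∀ x, HasDerivAt u (u' x) x) (hv : ∀ x, HasDerivAt v (v' x) x)
    (h : ∀ x, v' x * u x = v x * u' x) {x₀ : ℝ} (hx₀ : u x₀ ≠ 0) (x : ℝ) :
    v x = (v x₀ / u x₀) * u x := by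
  have hucont : Continuous u := by
    refine continuous_iff_continuousAt.2 fun y => (hu y).differentiableAt.continuousAt
  have hs : IsOpen {y : ℝ | u y ≠ 0} := isOpen_compl_singleton.preimage hucont
  obtain ⟨ε, hε, hball⟩ := Metric.isOpen_iff.1 hs x₀ hx₀
  have hder : ∀ y ∈ Metric.ball x₀ ε, HasDerivAt (fun t => v t / u t) 0 y := by
    intro y hy
    have hy' : u y ≠ 0 := hball hy
    have := (hv y).div (hu y) hy'
    rw [h y, sub_self, zero_div] at this
    exact this
  have hconst : ∀ y ∈ Metric.ball x₀ ε, v y / u y = v x₀ / u x₀ := by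
    intro y hy
    refine (convex_ball x₀ ε).is_const_of_fderivWithin_eq_zero
      (fun z hz => (hder z hz).differentiableAt.differentiableWithinAt)
      (fun z hz => ?_) hy (Metric.mem_ball_self hε)
    rw [fderivWithin_of_isOpen Metric.isOpen_ball hz]
    have h0 : HasFDerivAt (fun t => v t / u t)
        ((ContinuousLinearMap.smulRight (1 : ℝ →L[ℝ] ℝ) (0 : ℂ))) z := (hder z hz)
    rw [h0.fderiv]
    ext
    simp
  have hev : v =ᶠ[nhds x₀] fun t => (v x₀ / u x₀) * u t := by
    filter_upwards [Metric.ball_mem_nhds x₀ hε] with y hy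
    have hy' : u y ≠ 0 := hball hy
    rw [← hconst y hy, div_mul_cancel₀]
    exact hy'
  have hA2 : AnalyticOnNhd ℝ (fun t => (v x₀ / u x₀) * u t) Set.univ :=
    (analyticOnNhd_const).mul huA
  exact hvA.eqOn_of_preconnected_of_eventuallyEq hA2 isPreconnected_univ
    (Set.mem_univ x₀) hev (Set.mem_univ x)

theorem modulus_and_modulus_deriv_determine_up_to_conj
    (U : Set ℂ) (hU : IsOpen U) (hRU : ∀ x : ℝ, (x : ℂ) ∈ U)
    (F G : ℂ → ℂ) (hF : DifferentiableOn ℂ F U) (hG : DifferentiableOn ℂ G U)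
    (hmod : ∀ x : ℝ, ‖F x‖ = ‖G x‖)
    (hmod' : ∀ x : ℝ, ‖deriv F x‖ = ‖deriv G x‖) :
    ∃ c : ℂ, ‖c‖ = 1 ∧
      ((∀ x : ℝ, G x = c * F x) ∨ (∀ x : ℝ, G x = c * (starRingEnd ℂ) (F x))) := by
  by_cases hF0 : ∀ x : ℝ, F x = 0
  · refine ⟨1, by simp, Or.inl fun x => ?_⟩
    have h := hmod x
    rw [hF0 x] at h
    simp only [norm_zero] at h
    have : G x = 0 := by
      have := norm_eq_zero.1 h.symm
      exact this
    rw [this, hF0 x, mul_zero]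
  push_neg at hF0
  obtain ⟨x₀, hx₀⟩ := hF0
  -- analytic data
  have hFa : AnalyticOnNhd ℂ F U := hF.analyticOnNhd hU
  have hGa : AnalyticOnNhd ℂ G U := hG.analyticOnNhd hU
  have hF'a : AnalyticOnNhd ℂ (deriv F) U := hFa.deriv_of_isOpen hU
  have hG'a : AnalyticOnNhd ℂ (deriv G) U := hGa.deriv_of_isOpen hU
  have hofReal : ∀ x : ℝ, AnalyticAt ℝ (fun t : ℝ => (t : ℂ)) x := fun x =>
    Complex.ofRealCLM.analyticAt x
  have hcomp : ∀ (H : ℂ → ℂ), AnalyticOnNhd ℂ H U →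
      AnalyticOnNhd ℝ (fun t : ℝ => H (t : ℂ)) Set.univ := by
    intro H hH x _
    exact ((hH (x : ℂ) (hRU x)).restrictScalars).comp (hofReal x)
  have hconjA : ∀ (h : ℝ → ℂ), AnalyticOnNhd ℝ h Set.univ →
      AnalyticOnNhd ℝ (fun t => (starRingEnd ℂ) (h t)) Set.univ := by
    intro h hh x _
    exact (Complex.conjCLE.analyticAt (h x)).comp (hh x (Set.mem_univ x))
  have hfA : AnalyticOnNhd ℝ (fun t : ℝ => F t) Set.univ := hcomp F hFa
  have hgA : AnalyticOnNhd ℝ (fun t : ℝ => G t) Set.univ := hcomp G hGa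
  have hf'A : AnalyticOnNhd ℝ (fun t : ℝ => deriv F t) Set.univ := hcomp _ hF'a
  have hg'A : AnalyticOnNhd ℝ (fun t : ℝ => deriv G t) Set.univ := hcomp _ hG'a
  -- derivatives
  have hfd : ∀ x : ℝ, HasDerivAt (fun t : ℝ => F t) (deriv F x) x := fun x =>
    ((hF.differentiableAt (hU.mem_nhds (hRU x))).hasDerivAt).comp_ofReal
  have hgd : ∀ x : ℝ, HasDerivAt (fun t : ℝ => G t) (deriv G x) x := fun x =>
    ((hG.differentiableAt (hU.mem_nhds (hRU x))).hasDerivAt).comp_ofReal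
  have hconjd : ∀ (h : ℝ → ℂ) (h' : ℂ) (x : ℝ), HasDerivAt h h' x →
      HasDerivAt (fun t => (starRingEnd ℂ) (h t)) ((starRingEnd ℂ) h') x := by
    intro h h' x hh
    have := Complex.conjCLE.hasFDerivAt.comp_hasDerivAt x hh
    exact this
  have hfbard : ∀ x : ℝ, HasDerivAt (fun t : ℝ => (starRingEnd ℂ) (F t))
      ((starRingEnd ℂ) (deriv F x)) x := fun x => hconjd _ _ x (hfd x)
  have hgbard : ∀ x : ℝ, HasDerivAt (fun t : ℝ => (starRingEnd ℂ) (G t))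
      ((starRingEnd ℂ) (deriv G x)) x := fun x => hconjd _ _ x (hgd x)
  -- pointwise identities
  have h1 : ∀ x : ℝ, F x * (starRingEnd ℂ) (F x) = G x * (starRingEnd ℂ) (G x) := by
    intro x
    rw [Complex.mul_conj, Complex.mul_conj, Complex.normSq_eq_norm_sq, Complex.normSq_eq_norm_sq, hmod x]
  have h2 : ∀ x : ℝ, deriv F x * (starRingEnd ℂ) (deriv F x)
      = deriv G x * (starRingEnd ℂ) (deriv G x) := by
    intro x
    rw [Complex.mul_conj, Complex.mul_conj, Complex.normSq_eq_norm_sq, Complex.normSq_eq_norm_sq, hmod' x]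
  have h3 : ∀ x : ℝ, deriv F x * (starRingEnd ℂ) (F x) + F x * (starRingEnd ℂ) (deriv F x)
      = deriv G x * (starRingEnd ℂ) (G x) + G x * (starRingEnd ℂ) (deriv G x) := by
    intro x
    have hFD : HasDerivAt (fun t : ℝ => F t * (starRingEnd ℂ) (F t))
        (deriv F x * (starRingEnd ℂ) (F x) + F x * (starRingEnd ℂ) (deriv F x)) x :=
      (hfd x).mul (hfbard x)
    have hGD : HasDerivAt (fun t : ℝ => G t * (starRingEnd ℂ) (G t))
        (deriv G x * (starRingEnd ℂ) (G x) + G x * (starRingEnd ℂ) (deriv G x)) x :=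
      (hgd x).mul (hgbard x)
    have hfun : (fun t : ℝ => F t * (starRingEnd ℂ) (F t))
        = fun t : ℝ => G t * (starRingEnd ℂ) (G t) := funext fun t => h1 t
    rw [hfun] at hFD
    exact hFD.unique hGD
  -- the key algebraic identity
  have key : ∀ x : ℝ,
      (deriv G x * F x - G x * deriv F x)
        * (deriv G x * (starRingEnd ℂ) (F x) - G x * (starRingEnd ℂ) (deriv F x)) = 0 := by
    intro x
    linear_combination (deriv G x)^2 * h1 x + (G x)^2 * h2 x - (G x) * (deriv G x) * h3 x
  have hx₀' : F (x₀ : ℂ) ≠ 0 := hx₀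
  by_cases hA : ∀ x : ℝ, deriv G x * F x - G x * deriv F x = 0
  · -- G = c F
    refine ⟨G x₀ / F x₀, ?_, Or.inl fun x => ?_⟩
    · rw [norm_div, ← hmod x₀, div_self]
      simpa using hx₀'
    · exact aux_prop_const hfA hgA hfd hgd
        (fun t => sub_eq_zero.1 (hA t)) hx₀' x
  · push_neg at hA
    obtain ⟨x₁, hx₁⟩ := hA
    -- B vanishes near x₁, hence everywhere
    have hAcont : ContinuousAt (fun x : ℝ => deriv G x * F x - G x * deriv F x) x₁ := by
      exact (((hg'A x₁ trivial).continuousAt.mul (hfA x₁ trivial).continuousAt).sub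
        ((hgA x₁ trivial).continuousAt.mul (hf'A x₁ trivial).continuousAt))
    have hBev : (fun x : ℝ => deriv G x * (starRingEnd ℂ) (F x)
        - G x * (starRingEnd ℂ) (deriv F x)) =ᶠ[nhds x₁] fun _ => (0 : ℂ) := by
      filter_upwards [hAcont.eventually_ne hx₁] with y hy
      have := key y
      exact (mul_eq_zero.1 this).resolve_left hy
    have hBA : AnalyticOnNhd ℝ (fun x : ℝ => deriv G x * (starRingEnd ℂ) (F x)
        - G x * (starRingEnd ℂ) (deriv F x)) Set.univ :=
      (hg'A.mul (hconjA _ hfA)).sub (hgA.mul (hconjA _ hf'A))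
    have hB : ∀ x : ℝ, deriv G x * (starRingEnd ℂ) (F x)
        - G x * (starRingEnd ℂ) (deriv F x) = 0 := fun x =>
      hBA.eqOn_of_preconnected_of_eventuallyEq analyticOnNhd_const isPreconnected_univ
        (Set.mem_univ x₁) hBev (Set.mem_univ x)
    -- G = c * conj F
    have hx₀'' : (starRingEnd ℂ) (F (x₀ : ℂ)) ≠ 0 := by
      simpa using hx₀'
    refine ⟨G x₀ / (starRingEnd ℂ) (F x₀), ?_, Or.inr fun x => ?_⟩
    · rw [norm_div, Complex.norm_conj, ← hmod x₀, div_self]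
      simpa using hx₀'
    · exact aux_prop_const (hconjA _ hfA) hgA hfbard hgd
        (fun t => sub_eq_zero.1 (hB t)) hx₀'' x
end

section
/- Let d ≥ 1 and let F, G : ℂ^d → ℂ be entire (holomorphic on all of ℂ^d) and not identically zero. Suppose that for every j ∈ {1,…,d} there exists a function φⱼ : ℝ^{d-1} → ℂ taking only values of modulus 1 such that F(x) = φⱼ(x^{(j)})·G(x) for every x ∈ ℝ^d, where x^{(j)} = (x₁,…,x_{j−1},x_{j+1},…,x_d) ∈ ℝ^{d−1} is x with the j-th coordinate removed. Then there exists c ∈ ℂ with |c| = 1 such that F = c·G on ℂ^d. -/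
open Filter Topology

lemma aux_countable_zeros {f : ℂ → ℂ} (hf : Differentiable ℂ f) {w : ℂ} (hw : f w ≠ 0) :
    {z : ℂ | f z = 0}.Countable := by
  set Z := {z : ℂ | f z = 0} with hZ
  have hfa : AnalyticOnNhd ℂ f Set.univ := Complex.analyticOnNhd_univ_iff_differentiable.mpr hf
  have key : ∀ x ∈ Z, ∃ U : Set ℂ, IsOpen U ∧ x ∈ U ∧ U ∩ Z ⊆ {x} := by
    intro x hx
    rcases (hfa x (Set.mem_univ x)).eventually_eq_zero_or_eventually_ne_zero with hev | hev
    · exact absurd (hfa.eqOn_zero_of_preconnected_of_eventuallyEq_zero isPreconnected_univ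
        (Set.mem_univ x) hev (Set.mem_univ w)) hw
    · rw [eventually_nhdsWithin_iff] at hev
      rcases eventually_nhds_iff.1 hev with ⟨U, hU, hUo, hxU⟩
      refine ⟨U, hUo, hxU, ?_⟩
      rintro y ⟨hyU, hyZ⟩
      by_contra hxy
      exact hU y hyU (by simpa using hxy) hyZ
  obtain ⟨b, hbc, -, hbb⟩ := TopologicalSpace.exists_countable_basis ℂ
  have choice : ∀ x : Z, ∃ v : Set ℂ, v ∈ b ∧ (x : ℂ) ∈ v ∧ v ∩ Z ⊆ {(x : ℂ)} := by
    rintro ⟨x, hx⟩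
    obtain ⟨U, hUo, hxU, hsub⟩ := key x hx
    obtain ⟨v, hvb, hxv, hvU⟩ := hbb.exists_subset_of_mem_open hxU hUo
    exact ⟨v, hvb, hxv, fun y hy => hsub ⟨hvU hy.1, hy.2⟩⟩
  choose v hvb hxv hvsub using choice
  haveI : Countable b := hbc.to_subtype
  rw [← Set.countable_coe_iff]
  have hinj : Function.Injective (fun x : Z => (⟨v x, hvb x⟩ : b)) := by
    intro x y hxy
    have hvv : v x = v y := congrArg Subtype.val hxy
    have : (y : ℂ) ∈ v x ∩ Z := ⟨hvv ▸ hxv y, y.2⟩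
    exact Subtype.ext (hvsub x this).symm
  exact hinj.countable

lemma aux_vanish_real {f : ℂ → ℂ} (hf : Differentiable ℂ f) (h0 : ∀ t : ℝ, f t = 0)
    (z : ℂ) : f z = 0 := by
  have hfa : AnalyticOnNhd ℂ f Set.univ := Complex.analyticOnNhd_univ_iff_differentiable.mpr hf
  have hfreq : ∃ᶠ w in 𝓝[≠] (0 : ℂ), f w = 0 := by
    have htend : Tendsto (fun k : ℕ => ((1 / (k + 1) : ℝ) : ℂ)) atTop (𝓝[≠] (0 : ℂ)) := by
      rw [tendsto_nhdsWithin_iff]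
      constructor
      · have h1 : Tendsto (fun k : ℕ => (1 / (k + 1) : ℝ)) atTop (𝓝 0) :=
          tendsto_one_div_add_atTop_nhds_zero_nat
        have := (Complex.continuous_ofReal.tendsto 0).comp h1
        simpa [Function.comp_def] using this
      · refine Filter.Eventually.of_forall fun k => ?_
        simp only [Set.mem_compl_iff, Set.mem_singleton_iff]
        intro hc
        have h2 : (1 / (k + 1) : ℝ) = 0 := by exact_mod_cast hc
        have : (0:ℝ) < 1 / (k + 1) := by positivity
        linarith
    apply htend.frequently
    exact (Filter.Eventually.of_forall fun k => h0 _).frequently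
  exact hfa.eqOn_zero_of_preconnected_of_frequently_eq_zero isPreconnected_univ
    (Set.mem_univ 0) hfreq (Set.mem_univ z)



lemma aux_slice_diff {d : ℕ} {H : (Fin d → ℂ) → ℂ} (hH : Differentiable ℂ H)
    (z : Fin d → ℂ) (j : Fin d) :
    Differentiable ℂ (fun s : ℂ => H (fun i => if i = j then s else z i)) := by
  apply hH.comp
  apply differentiable_pi.mpr
  intro i
  by_cases hij : i = j
  · simpa [hij] using differentiable_id
  · simpa [hij] using differentiable_const (z i)

lemma aux_vanish_real_multi {d : ℕ} {H : (Fin d → ℂ) → ℂ} (hH : Differentiable ℂ H)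
    (h0 : ∀ x : Fin d → ℝ, H (fun i => (x i : ℂ)) = 0) (z : Fin d → ℂ) : H z = 0 := by
  suffices Q : ∀ k : ℕ, ∀ z : Fin d → ℂ, (∀ i : Fin d, k ≤ (i : ℕ) → (z i).im = 0) → H z = 0 by
    exact Q d z (fun i hi => absurd i.isLt (by omega))
  intro k
  induction k with
  | zero =>
    intro z hz
    have : z = fun i => (((z i).re : ℝ) : ℂ) := by
      funext i
      exact (Complex.ext rfl (by simpa using hz i (Nat.zero_le _)))
    rw [this]
    exact h0 (fun i => (z i).re)
  | succ k IH =>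
    intro z hz
    by_cases hk : k < d
    · set jk : Fin d := ⟨k, hk⟩
      have hf : ∀ t : ℝ, H (fun i => if i = jk then (t : ℂ) else z i) = 0 := by
        intro t
        apply IH
        intro i hi
        by_cases hij : i = jk
        · simp [hij]
        · have : k + 1 ≤ (i : ℕ) := by
            rcases Nat.lt_or_ge (i : ℕ) (k+1) with h1 | h1
            · exact absurd (Fin.ext (by omega : (i : ℕ) = k)) hij
            · exact h1
          simpa [hij] using hz i this
      have := aux_vanish_real (aux_slice_diff hH z jk) hf (z jk)
      simpa [Function.update_eq_self] using (by
        have he : (fun i => if i = jk then z jk else z i) = z := by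
          funext i; by_cases hij : i = jk <;> simp [hij]
        rw [he] at this
        exact this : H z = 0)
    · exact IH z (fun i hi => hz i (by omega))

theorem entire_functions_equal_up_to_unimodular_constant
    (n : ℕ) (F G : (Fin (n + 1) → ℂ) → ℂ)
    (hF : Differentiable ℂ F) (hG : Differentiable ℂ G)
    (hF0 : F ≠ 0) (hG0 : G ≠ 0)
    (h : ∀ j : Fin (n + 1), ∃ φ : (Fin n → ℝ) → ℂ,
      (∀ y : Fin n → ℝ, ‖φ y‖ = 1) ∧
      (∀ x : Fin (n + 1) → ℝ,
        F (fun i => (x i : ℂ)) = φ (j.removeNth x) * G (fun i => (x i : ℂ)))) :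
    ∃ c : ℂ, ‖c‖ = 1 ∧ F = fun z => c * G z := by
  classical
  have key : ∀ k : ℕ, ∀ a : Fin (n + 1) → ℝ, ∃ c : ℂ, ‖c‖ = 1 ∧
      ∀ x : Fin (n + 1) → ℝ, (∀ i : Fin (n + 1), k ≤ (i : ℕ) → x i = a i) →
        F (fun i => (x i : ℂ)) = c * G (fun i => (x i : ℂ)) := by
    intro k
    induction k with
    | zero =>
      intro a
      obtain ⟨φ, hφ1, hφe⟩ := h 0
      refine ⟨φ ((0 : Fin (n + 1)).removeNth a), hφ1 _, fun x hx => ?_⟩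
      have hxa : x = a := funext fun i => hx i (Nat.zero_le _)
      rw [hxa]; exact hφe a
    | succ k IH =>
      intro a
      by_cases hk : k < n + 1
      · set jk : Fin (n + 1) := ⟨k, hk⟩ with hjk
        obtain ⟨φ, hφ1, hφe⟩ := h jk
        by_cases hA : ∃ b : Fin (n + 1) → ℝ,
            (∀ i : Fin (n + 1), k + 1 ≤ (i : ℕ) → b i = a i) ∧ G (fun i => (b i : ℂ)) ≠ 0
        · obtain ⟨b, hbs, hGb⟩ := hA
          refine ⟨φ (jk.removeNth b), hφ1 _, ?_⟩
          have const : ∀ x y : Fin (n + 1) → ℝ,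
              (∀ i : Fin (n + 1), k + 1 ≤ (i : ℕ) → x i = a i) →
              (∀ i : Fin (n + 1), k + 1 ≤ (i : ℕ) → y i = a i) →
              G (fun i => (x i : ℂ)) ≠ 0 → G (fun i => (y i : ℂ)) ≠ 0 →
              φ (jk.removeNth x) = φ (jk.removeNth y) := by
            intro x y hxs hys hGx hGy
            have hCx : (fun i => if i = jk then ((x jk : ℝ) : ℂ) else (x i : ℂ))
                = fun i => (x i : ℂ) := by
              funext i; by_cases hij : i = jk <;> simp [hij]
            have hCy : (fun i => if i = jk then ((y jk : ℝ) : ℂ) else (y i : ℂ))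
                = fun i => (y i : ℂ) := by
              funext i; by_cases hij : i = jk <;> simp [hij]
            have hv1 : G (fun i => if i = jk then ((x jk : ℝ) : ℂ) else (x i : ℂ)) ≠ 0 := by
              rw [hCx]; exact hGx
            have hv2 : G (fun i => if i = jk then ((y jk : ℝ) : ℂ) else (y i : ℂ)) ≠ 0 := by
              rw [hCy]; exact hGy
            have hcnt1 := aux_countable_zeros (aux_slice_diff hG (fun i => (x i : ℂ)) jk) hv1
            have hcnt2 := aux_countable_zeros (aux_slice_diff hG (fun i => (y i : ℂ)) jk) hv2
            have hex : ∃ t' : ℝ, G (fun i => if i = jk then (t' : ℂ) else (x i : ℂ)) ≠ 0 ∧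
                G (fun i => if i = jk then (t' : ℂ) else (y i : ℂ)) ≠ 0 := by
              by_contra hcon
              push_neg at hcon
              apply Cardinal.not_countable_real
              have hsub : (Set.univ : Set ℝ) ⊆ Complex.ofReal ⁻¹'
                  ({z : ℂ | G (fun i => if i = jk then z else (x i : ℂ)) = 0} ∪
                   {z : ℂ | G (fun i => if i = jk then z else (y i : ℂ)) = 0}) := by
                intro t _
                by_cases h1 : G (fun i => if i = jk then (t : ℂ) else (x i : ℂ)) = 0
                · exact Or.inl h1
                · exact Or.inr (hcon t h1)
              exact Set.Countable.mono hsub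
                ((hcnt1.union hcnt2).preimage Complex.ofReal_injective)
            obtain ⟨t', ht1, ht2⟩ := hex
            have hCx' : (fun i => ((Function.update x jk t' i : ℝ) : ℂ))
                = fun i => if i = jk then (t' : ℂ) else (x i : ℂ) := by
              funext i; by_cases hij : i = jk <;> simp [Function.update_apply, hij]
            have hCy' : (fun i => ((Function.update y jk t' i : ℝ) : ℂ))
                = fun i => if i = jk then (t' : ℂ) else (y i : ℂ) := by
              funext i; by_cases hij : i = jk <;> simp [Function.update_apply, hij]
            have hGx' : G (fun i => ((Function.update x jk t' i : ℝ) : ℂ)) ≠ 0 := by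
              rw [hCx']; exact ht1
            have hGy' : G (fun i => ((Function.update y jk t' i : ℝ) : ℂ)) ≠ 0 := by
              rw [hCy']; exact ht2
            obtain ⟨c', hc'1, hc'⟩ := IH (Function.update x jk t')
            have h1 : F (fun i => ((Function.update x jk t' i : ℝ) : ℂ))
                = c' * G (fun i => ((Function.update x jk t' i : ℝ) : ℂ)) :=
              hc' _ (fun i _ => rfl)
            have h2 : F (fun i => ((Function.update y jk t' i : ℝ) : ℂ))
                = c' * G (fun i => ((Function.update y jk t' i : ℝ) : ℂ)) := by
              apply hc'
              intro i hi
              by_cases hij : i = jk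
              · rw [hij]; simp
              · have hi1 : k + 1 ≤ (i : ℕ) := by
                  rcases Nat.lt_or_ge (i : ℕ) (k + 1) with h1' | h1'
                  · exact absurd (Fin.ext (by simp [hjk]; omega : (i : ℕ) = (jk : ℕ))) hij
                  · exact h1'
                rw [Function.update_of_ne hij, Function.update_of_ne hij,
                  hxs i hi1, hys i hi1]
            have e1 : φ (jk.removeNth (Function.update x jk t')) = c' :=
              mul_right_cancel₀ hGx' ((hφe _).symm.trans h1)
            have e2 : φ (jk.removeNth (Function.update y jk t')) = c' :=
              mul_right_cancel₀ hGy' ((hφe _).symm.trans h2)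
            rw [Fin.removeNth_update] at e1 e2
            rw [e1.trans e2.symm]
          intro x hx
          by_cases hGx : G (fun i => (x i : ℂ)) = 0
          · rw [hφe x, hGx]; ring
          · rw [hφe x, const x b hx hbs hGx hGb]
        · refine ⟨1, by simp, fun x hx => ?_⟩
          have hGx : G (fun i => (x i : ℂ)) = 0 := by
            by_contra hne; exact hA ⟨x, hx, hne⟩
          rw [hφe x, hGx]; ring
      · obtain ⟨c, hc1, hc⟩ := IH a
        exact ⟨c, hc1, fun x hx => hc x (fun i hi => hx i (by omega))⟩
  obtain ⟨c, hc1, hc⟩ := key (n + 1) (fun _ => 0)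
  refine ⟨c, hc1, ?_⟩
  funext z
  have hz := aux_vanish_real_multi (H := fun z => F z - c * G z) (hF.sub (hG.const_mul c))
    (fun x => by
      show F (fun i => ((x i : ℝ) : ℂ)) - c * G (fun i => ((x i : ℝ) : ℂ)) = 0
      rw [hc x (fun i hi => absurd i.isLt (by omega))]; ring) z
  have : F z - c * G z = 0 := hz
  exact sub_eq_zero.mp this
end

section
/- Let N ≥ 1 and let φ, ψ ∈ ℂ^N. If |P_φ(k/(2N−1))| = |P_ψ(k/(2N−1))| and |P_φ′(k/(2N−1))| = |P_ψ′(k/(2N−1))| for every k = 0, 1, …, 2N−2, then there exists λ ∈ ℂ with |λ| = 1 such that ψ = λ·φ. -/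
open Real

/-- The analytic trigonometric polynomial `P_ψ(x) = ∑ ψ_j e^{2πijx}` associated to `ψ ∈ ℂ^N`. -/
noncomputable def trigPoly {N : ℕ} (ψ : Fin N → ℂ) (x : ℝ) : ℂ :=
  ∑ j : Fin N, ψ j * Complex.exp (2 * Real.pi * Complex.I * (j : ℕ) * x)

/-- Its derivative `P_ψ′(x) = ∑ 2πij·ψ_j e^{2πijx}`. -/
noncomputable def trigPolyDeriv {N : ℕ} (ψ : Fin N → ℂ) (x : ℝ) : ℂ :=
  ∑ j : Fin N, 2 * Real.pi * Complex.I * (j : ℕ) * ψ j *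
    Complex.exp (2 * Real.pi * Complex.I * (j : ℕ) * x)

namespace PRAux

open Polynomial Complex Finset

variable {N : ℕ}

noncomputable def E (x : ℝ) : ℂ := Complex.exp (2 * (Real.pi : ℂ) * Complex.I * x)

noncomputable def pol (a : Fin N → ℂ) : ℂ[X] := ∑ j : Fin N, C (a j) * X ^ (j : ℕ)

noncomputable def dcoef (a : Fin N → ℂ) : Fin N → ℂ := fun j => ((j : ℕ) : ℂ) * a j

noncomputable def scoef (a : Fin N → ℂ) : Fin N → ℂ := fun j => (starRingEnd ℂ) (a j.rev)

lemma E_ne_zero (x : ℝ) : E x ≠ 0 := Complex.exp_ne_zero _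

lemma conj_E_mul (x : ℝ) : (starRingEnd ℂ) (E x) * E x = 1 := by
  rw [E, ← Complex.exp_conj, ← Complex.exp_add]
  have : (starRingEnd ℂ) (2 * (Real.pi : ℂ) * Complex.I * x) = -(2 * (Real.pi : ℂ) * Complex.I * x) := by
    simp only [map_mul, map_ofNat, Complex.conj_I, Complex.conj_ofReal]
    ring
  rw [this, neg_add_cancel, Complex.exp_zero]

lemma E_pow (x : ℝ) (j : ℕ) : Complex.exp (2 * (Real.pi : ℂ) * Complex.I * (j : ℂ) * x) = E x ^ j := by
  rw [E, ← Complex.exp_nat_mul]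
  ring_nf

end PRAux

namespace PRAux
open Polynomial Complex Finset
variable {N : ℕ}

lemma pol_eval (a : Fin N → ℂ) (z : ℂ) :
    (pol a).eval z = ∑ j : Fin N, a j * z ^ (j : ℕ) := by
  simp [pol, eval_finset_sum]

lemma trigPoly_eq (a : Fin N → ℂ) (x : ℝ) : trigPoly a x = (pol a).eval (E x) := by
  rw [trigPoly, pol_eval]
  refine Finset.sum_congr rfl fun j _ => ?_
  rw [← E_pow]

lemma trigPolyDeriv_eq (a : Fin N → ℂ) (x : ℝ) :
    trigPolyDeriv a x = (2 * (Real.pi : ℂ) * Complex.I) * (pol (dcoef a)).eval (E x) := by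
  rw [trigPolyDeriv, pol_eval, Finset.mul_sum]
  refine Finset.sum_congr rfl fun j _ => ?_
  rw [← E_pow]
  simp only [dcoef]
  ring_nf

lemma pol_coeff (a : Fin N → ℂ) (i : ℕ) :
    (pol a).coeff i = if h : i < N then a ⟨i, h⟩ else 0 := by
  rw [pol, finset_sum_coeff]
  simp only [coeff_C_mul, coeff_X_pow, mul_ite, mul_one, mul_zero]
  by_cases h : i < N
  · rw [dif_pos h, Finset.sum_eq_single (⟨i, h⟩ : Fin N)]
    · simp
    · intro j _ hj
      rw [if_neg]
      intro hij
      exact hj (by ext; simp [hij])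
    · simp
  · rw [dif_neg h]
    apply Finset.sum_eq_zero
    intro j _
    rw [if_neg]
    intro hij
    exact h (hij ▸ j.isLt)

lemma pol_coeff_fin (a : Fin N → ℂ) (j : Fin N) : (pol a).coeff (j : ℕ) = a j := by
  rw [pol_coeff, dif_pos j.isLt]

lemma pol_eq_zero {a : Fin N → ℂ} (h : pol a = 0) : ∀ j, a j = 0 := by
  intro j
  rw [← pol_coeff_fin a j, h, coeff_zero]

lemma natDegree_pol_le (a : Fin N → ℂ) : (pol a).natDegree ≤ N - 1 := by
  apply natDegree_sum_le_of_forall_le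
  intro j _
  apply le_trans (natDegree_C_mul_le _ _)
  simpa using Nat.le_sub_one_of_lt j.isLt |>.trans_eq rfl

lemma conj_pol_eval (hN : 1 ≤ N) (a : Fin N → ℂ) (x : ℝ) :
    (starRingEnd ℂ) ((pol a).eval (E x)) * E x ^ (N - 1) = (pol (scoef a)).eval (E x) := by
  rw [pol_eval, pol_eval, map_sum, Finset.sum_mul]
  rw [← Equiv.sum_comp (Fin.revPerm) (fun j => scoef a j * E x ^ (j : ℕ))]
  refine Finset.sum_congr rfl fun j _ => ?_
  simp only [Fin.revPerm_apply, scoef, Fin.rev_rev, map_mul, map_pow]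
  have hj : (j : ℕ) ≤ N - 1 := Nat.le_sub_one_of_lt j.isLt
  have hrev : ((j.rev : Fin N) : ℕ) = N - 1 - (j : ℕ) := by
    rw [Fin.val_rev]; omega
  rw [hrev]
  have hsplit : E x ^ (N - 1) = E x ^ (j : ℕ) * E x ^ (N - 1 - (j : ℕ)) := by
    rw [← pow_add]; congr 1; omega
  rw [hsplit]
  have hone : ((starRingEnd ℂ) (E x)) ^ (j : ℕ) * E x ^ (j : ℕ) = 1 := by
    rw [← mul_pow, conj_E_mul, one_pow]
  calc (starRingEnd ℂ) (a j) * ((starRingEnd ℂ) (E x)) ^ (j : ℕ) *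
        (E x ^ (j : ℕ) * E x ^ (N - 1 - (j : ℕ)))
      = (starRingEnd ℂ) (a j) * (((starRingEnd ℂ) (E x)) ^ (j : ℕ) * E x ^ (j : ℕ)) *
        E x ^ (N - 1 - (j : ℕ)) := by ring
    _ = (starRingEnd ℂ) (a j) * E x ^ (N - 1 - (j : ℕ)) := by rw [hone]; ring

end PRAux

namespace PRAux
open Polynomial Complex Finset
variable {N : ℕ}

lemma E_injOn : Set.InjOn E (Set.Ico (0:ℝ) 1) := by
  intro x hx y hy hxy
  rw [E, E, Complex.exp_eq_exp_iff_exists_int] at hxy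
  obtain ⟨n, hn⟩ := hxy
  have h2 : (2 * (Real.pi : ℂ) * Complex.I) ≠ 0 := Complex.two_pi_I_ne_zero
  have hxy' : (x : ℂ) = (y : ℂ) + (n : ℂ) := by
    apply mul_left_cancel₀ h2
    rw [hn]; ring
  have hxyr : x = y + (n : ℝ) := by
    exact_mod_cast hxy'
  obtain ⟨hx0, hx1⟩ := hx
  obtain ⟨hy0, hy1⟩ := hy
  have hn0 : n = 0 := by
    have h1 : (n : ℝ) < 1 := by linarith
    have h2 : (-1 : ℝ) < n := by linarith
    have hi1 : n < 1 := by exact_mod_cast h1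
    have hi2 : (-1:ℤ) < n := by exact_mod_cast h2
    omega
  rw [hn0] at hxyr
  simpa using hxyr

lemma eq_zero_of_eval_circle (W : ℂ[X]) (h : ∀ x : ℝ, W.eval (E x) = 0) : W = 0 := by
  by_contra hW
  have hfin := Polynomial.finite_setOf_isRoot (p := W) hW
  have hinf : (E '' Set.Ico (0:ℝ) 1).Infinite :=
    Set.Infinite.image E_injOn (Set.Ico_infinite (by norm_num))
  have hsub : E '' Set.Ico (0:ℝ) 1 ⊆ {z | W.IsRoot z} := by
    rintro z ⟨x, _, rfl⟩
    exact h x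
  exact (hinf.mono hsub) hfin

lemma X_mul_derivative_pol (a : Fin N → ℂ) : X * derivative (pol a) = pol (dcoef a) := by
  rw [pol, derivative_sum, Finset.mul_sum, pol]
  refine Finset.sum_congr rfl fun j _ => ?_
  rw [derivative_C_mul, derivative_X_pow]
  rcases Nat.eq_zero_or_pos (j : ℕ) with h0 | hpos
  · simp [dcoef, h0]
  · have h1 : (j:ℕ) = ((j:ℕ) - 1) + 1 := (Nat.succ_pred_eq_of_pos hpos).symm
    have h2 : dcoef a j = ((j:ℕ):ℂ) * a j := rfl
    rw [h2]
    calc X * (C (a j) * (C (((j:ℕ):ℂ)) * X ^ ((j:ℕ)-1)))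
        = C (((j:ℕ):ℂ) * a j) * (X ^ ((j:ℕ)-1) * X) := by rw [C_mul]; ring
      _ = C (((j:ℕ):ℂ) * a j) * X ^ (((j:ℕ)-1)+1) := by rw [pow_succ]
      _ = C (((j:ℕ):ℂ) * a j) * X ^ ((j:ℕ)) := by rw [← h1]

lemma pol_scoef_dcoef (a : Fin N → ℂ) :
    pol (scoef (dcoef a)) = C (((N-1 : ℕ)) : ℂ) * pol (scoef a) - pol (dcoef (scoef a)) := by
  rw [pol, pol, pol, Finset.mul_sum, ← Finset.sum_sub_distrib]
  refine Finset.sum_congr rfl fun j _ => ?_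
  have hrev : (((j.rev : Fin N) : ℕ) : ℂ) = ((N-1:ℕ) : ℂ) - ((j:ℕ) : ℂ) := by
    rw [Fin.val_rev]
    rw [Nat.cast_sub (by omega : (j:ℕ) + 1 ≤ N), Nat.cast_sub (by have := j.isLt; omega : 1 ≤ N)]
    push_cast
    ring
  have hcoef : scoef (dcoef a) j = ((N-1:ℕ) : ℂ) * scoef a j - dcoef (scoef a) j := by
    simp only [scoef, dcoef, map_mul]
    rw [Complex.conj_natCast, hrev]
    ring
  rw [hcoef, C_sub, C_mul]
  ring

end PRAux

namespace PRAux
open Polynomial Complex Finset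
variable {N : ℕ}

lemma samples_to_identity (hN : 1 ≤ N) (a b : Fin N → ℂ)
    (h : ∀ k : ℕ, k < 2*N - 1 →
      ‖(pol a).eval (E ((k : ℝ) / ((2*N-1 : ℕ) : ℝ)))‖ =
      ‖(pol b).eval (E ((k : ℝ) / ((2*N-1 : ℕ) : ℝ)))‖) :
    pol a * pol (scoef a) = pol b * pol (scoef b) := by
  set M : ℕ := 2*N - 1 with hM
  have hM1 : 1 ≤ M := by omega
  have hsub : pol a * pol (scoef a) - pol b * pol (scoef b) = 0 := by
    apply Polynomial.eq_zero_of_natDegree_lt_card_of_eval_eq_zero _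
      (f := fun k : Fin M => E ((k : ℝ) / (M : ℝ)))
    · -- injectivity
      intro k k' hkk
      have hmem : ∀ k : Fin M, ((k : ℝ) / (M : ℝ)) ∈ Set.Ico (0:ℝ) 1 := by
        intro k
        constructor
        · positivity
        · rw [div_lt_one (by positivity)]
          exact_mod_cast k.isLt
      have := E_injOn (hmem k) (hmem k') hkk
      have hMne : (M : ℝ) ≠ 0 := by positivity
      field_simp at this
      ext
      exact_mod_cast this
    · -- evaluation
      intro k
      have hk := h k (by exact_mod_cast k.isLt)
      rw [eval_sub, eval_mul, eval_mul]
      rw [← conj_pol_eval hN a, ← conj_pol_eval hN b]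
      set z1 := (pol a).eval (E ((k : ℝ) / (M : ℝ)))
      set z2 := (pol b).eval (E ((k : ℝ) / (M : ℝ)))
      have h1 : z1 * ((starRingEnd ℂ) z1 * E ((k : ℝ) / (M : ℝ)) ^ (N-1)) =
          (Complex.normSq z1 : ℂ) * E ((k : ℝ) / (M : ℝ)) ^ (N-1) := by
        rw [← mul_assoc, Complex.mul_conj]
      have h2 : z2 * ((starRingEnd ℂ) z2 * E ((k : ℝ) / (M : ℝ)) ^ (N-1)) =
          (Complex.normSq z2 : ℂ) * E ((k : ℝ) / (M : ℝ)) ^ (N-1) := by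
        rw [← mul_assoc, Complex.mul_conj]
      rw [h1, h2]
      have : Complex.normSq z1 = Complex.normSq z2 := by
        rw [Complex.normSq_eq_norm_sq, Complex.normSq_eq_norm_sq, hk]
      rw [this, sub_self]
    · -- degree
      have d1 : (pol a * pol (scoef a)).natDegree ≤ (N-1) + (N-1) :=
        le_trans (natDegree_mul_le) (add_le_add (natDegree_pol_le _) (natDegree_pol_le _))
      have d2 : (pol b * pol (scoef b)).natDegree ≤ (N-1) + (N-1) :=
        le_trans (natDegree_mul_le) (add_le_add (natDegree_pol_le _) (natDegree_pol_le _))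
      have := natDegree_sub_le (pol a * pol (scoef a)) (pol b * pol (scoef b))
      rw [Fintype.card_fin]
      omega
  exact sub_eq_zero.mp hsub

lemma coeff_mul_pol (hN : 1 ≤ N) (c d : Fin N → ℂ) :
    (pol c * pol d).coeff (N-1) = ∑ j : Fin N, c j * d j.rev := by
  rw [coeff_mul, Finset.Nat.sum_antidiagonal_eq_sum_range_succ_mk]
  have hNN : (N - 1).succ = N := by omega
  rw [hNN, ← Fin.sum_univ_eq_sum_range]
  refine Finset.sum_congr rfl fun j _ => ?_
  dsimp only
  rw [pol_coeff_fin]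
  have h2 : N - 1 - (j:ℕ) < N := by omega
  rw [pol_coeff, dif_pos h2]
  have : (⟨N - 1 - (j:ℕ), h2⟩ : Fin N) = j.rev := by
    ext
    simp only [Fin.val_rev]
    omega
  rw [this]

end PRAux

namespace PRAux
open Polynomial Complex Finset
variable {N : ℕ}

lemma wronskian_prop (p q : ℂ[X]) (hp : p ≠ 0) (h : q * derivative p = p * derivative q) :
    ∃ c : ℂ, q = C c * p := by
  classical
  by_cases hq : q = 0
  · exact ⟨0, by simp [hq]⟩
  set d := GCDMonoid.gcd p q with hd
  have hdvd1 : d ∣ p := gcd_dvd_left p q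
  have hdvd2 : d ∣ q := gcd_dvd_right p q
  have hdne : d ≠ 0 := gcd_ne_zero_of_left hp
  have hp1 : p = d * (p / d) := (EuclideanDomain.mul_div_cancel' hdne hdvd1).symm
  have hq1 : q = d * (q / d) := (EuclideanDomain.mul_div_cancel' hdne hdvd2).symm
  set p1 := p / d with hp1d
  set q1 := q / d with hq1d
  have hcop : IsCoprime p1 q1 := isCoprime_div_gcd_div_gcd (p := p) (q := q) hq
  have hp1ne : p1 ≠ 0 := left_div_gcd_ne_zero hp
  have key : q1 * derivative p1 = p1 * derivative q1 := by
    have h' := h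
    rw [hp1, hq1, derivative_mul, derivative_mul] at h'
    have h2 : (d*d) * (q1 * derivative p1 - p1 * derivative q1) = 0 := by
      linear_combination h'
    rcases mul_eq_zero.mp h2 with h3 | h3
    · exact absurd h3 (mul_ne_zero hdne hdne)
    · exact sub_eq_zero.mp h3
  have hdvd : p1 ∣ q1 * derivative p1 := ⟨derivative q1, key⟩
  have hpp : p1 ∣ derivative p1 := hcop.dvd_of_dvd_mul_left hdvd
  have hdp1 : derivative p1 = 0 := by
    by_contra hne
    have h1 := Polynomial.natDegree_le_of_dvd hpp hne
    have h0 : p1.natDegree ≠ 0 := by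
      intro h00
      rw [Polynomial.eq_C_of_natDegree_eq_zero h00] at hne
      simp at hne
    have h2 := Polynomial.natDegree_derivative_lt h0
    omega
  obtain ⟨c1, hc1⟩ : ∃ c, p1 = C c :=
    ⟨_, Polynomial.eq_C_of_natDegree_eq_zero (Polynomial.natDegree_eq_zero_of_derivative_eq_zero hdp1)⟩
  have hdq1 : derivative q1 = 0 := by
    rw [hdp1, mul_zero] at key
    rcases mul_eq_zero.mp key.symm with h3 | h3
    · exact absurd h3 hp1ne
    · exact h3
  obtain ⟨c2, hc2⟩ : ∃ c, q1 = C c :=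
    ⟨_, Polynomial.eq_C_of_natDegree_eq_zero (Polynomial.natDegree_eq_zero_of_derivative_eq_zero hdq1)⟩
  have hc1ne : c1 ≠ 0 := by
    intro h0
    rw [h0, map_zero] at hc1
    exact hp1ne hc1
  refine ⟨c2 / c1, ?_⟩
  have hkey : C (c2 / c1) * p1 = q1 := by
    rw [hc1, hc2, ← C_mul, div_mul_cancel₀ _ hc1ne]
  calc q = d * q1 := hq1
    _ = C (c2 / c1) * (d * p1) := by rw [← hkey]; ring
    _ = C (c2 / c1) * p := by rw [← hp1]

end PRAux

namespace PRAux
open Polynomial Complex Finset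
variable {N : ℕ}

lemma star_identity (a b : Fin N → ℂ)
    (H1 : pol a * pol (scoef a) = pol b * pol (scoef b)) :
    pol (dcoef a) * pol (scoef a) - pol a * pol (scoef (dcoef a)) =
    pol (dcoef b) * pol (scoef b) - pol b * pol (scoef (dcoef b)) := by
  have hder := congrArg derivative H1
  rw [derivative_mul, derivative_mul] at hder
  rw [← X_mul_derivative_pol a, ← X_mul_derivative_pol b,
    pol_scoef_dcoef a, pol_scoef_dcoef b,
    ← X_mul_derivative_pol (scoef a), ← X_mul_derivative_pol (scoef b)]
  linear_combination X * hder - C (((N-1:ℕ)) : ℂ) * H1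

lemma key_product_zero (hN : 1 ≤ N) (a b : Fin N → ℂ)
    (H1 : pol a * pol (scoef a) = pol b * pol (scoef b))
    (H2 : pol (dcoef a) * pol (scoef (dcoef a)) = pol (dcoef b) * pol (scoef (dcoef b))) :
    (pol (scoef a) * pol (dcoef a) - pol (scoef b) * pol (dcoef b)) *
    (pol (scoef a) * pol (dcoef a) + pol b * pol (scoef (dcoef b))) = 0 := by
  have Sstar := star_identity a b H1
  apply eq_zero_of_eval_circle
  intro x
  simp only [eval_mul, eval_sub, eval_add]
  set ζ := E x with hζ
  set c : ℂ := ζ ^ (N-1) with hc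
  have hcne : c ≠ 0 := pow_ne_zero _ (E_ne_zero x)
  have eA := conj_pol_eval hN a x
  have eB := conj_pol_eval hN (dcoef a) x
  have eC := conj_pol_eval hN b x
  have eD := conj_pol_eval hN (dcoef b) x
  set α := (pol a).eval ζ
  set β := (pol (dcoef a)).eval ζ
  set γ := (pol b).eval ζ
  set δ := (pol (dcoef b)).eval ζ
  set α' := (pol (scoef a)).eval ζ
  set β' := (pol (scoef (dcoef a))).eval ζ
  set γ' := (pol (scoef b)).eval ζ
  set δ' := (pol (scoef (dcoef b))).eval ζ
  have H1x : α * α' = γ * γ' := by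
    have := congrArg (fun W => W.eval ζ) H1
    simpa [eval_mul] using this
  have H2x : β * β' = δ * δ' := by
    have := congrArg (fun W => W.eval ζ) H2
    simpa [eval_mul] using this
  have Sx : β * α' - α * β' = δ * γ' - γ * δ' := by
    have := congrArg (fun W => W.eval ζ) Sstar
    simpa [eval_mul, eval_sub] using this
  have E1 : α * (starRingEnd ℂ) α = γ * (starRingEnd ℂ) γ := by
    apply mul_right_cancel₀ hcne
    linear_combination H1x + α * eA - γ * eC
  have E2 : β * (starRingEnd ℂ) β = δ * (starRingEnd ℂ) δ := by
    apply mul_right_cancel₀ hcne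
    linear_combination H2x + β * eB - δ * eD
  have E3 : β * (starRingEnd ℂ) α - α * (starRingEnd ℂ) β =
      δ * (starRingEnd ℂ) γ - γ * (starRingEnd ℂ) δ := by
    apply mul_right_cancel₀ hcne
    linear_combination Sx + β * eA - α * eB - δ * eC + γ * eD
  rw [← eA, ← eC, ← eD]
  linear_combination (c^2 * ((starRingEnd ℂ) α * β)) * E3 +
    (c^2 * (β * (starRingEnd ℂ) β)) * E1 + (c^2 * (γ * (starRingEnd ℂ) γ)) * E2

end PRAux

namespace PRAux
open Polynomial Complex Finset
variable {N : ℕ}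

lemma pol_scoef_ne_zero {a : Fin N → ℂ} (ha : pol a ≠ 0) : pol (scoef a) ≠ 0 := by
  intro h
  apply ha
  rw [pol]
  apply Finset.sum_eq_zero
  intro j _
  have := pol_eq_zero h j.rev
  simp only [scoef, Fin.rev_rev] at this
  have : a j = 0 := by
    have := congrArg (starRingEnd ℂ) this
    simpa using this
  simp [this]

lemma pol_zero_of_all_zero {a : Fin N → ℂ} (h : ∀ j, a j = 0) : pol a = 0 := by
  rw [pol]; apply Finset.sum_eq_zero; intro j _; simp [h j]

end PRAux

open PRAux Polynomial Complex Finset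

theorem samples_modulus_and_deriv_modulus_determine
    (N : ℕ) (hN : 1 ≤ N) (φ ψ : Fin N → ℂ)
    (h1 : ∀ k : ℕ, k ≤ 2 * N - 2 →
      ‖trigPoly φ (k / (2 * N - 1))‖
        = ‖trigPoly ψ (k / (2 * N - 1))‖)
    (h2 : ∀ k : ℕ, k ≤ 2 * N - 2 →
      ‖trigPolyDeriv φ (k / (2 * N - 1))‖
        = ‖trigPolyDeriv ψ (k / (2 * N - 1))‖) :
    ∃ l : ℂ, ‖l‖ = 1 ∧ ψ = fun j => l * φ j := by
  classical
  have hcast : (((2*N-1:ℕ)):ℝ) = 2*(N:ℝ) - 1 := by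
    push_cast [Nat.cast_sub (by omega : 1 ≤ 2*N)]
    ring
  have h1' : ∀ k : ℕ, k < 2*N - 1 →
      ‖(pol φ).eval (E ((k : ℝ) / ((2*N-1 : ℕ) : ℝ)))‖ =
      ‖(pol ψ).eval (E ((k : ℝ) / ((2*N-1 : ℕ) : ℝ)))‖ := by
    intro k hk
    have h := h1 k (by omega)
    rw [trigPoly_eq, trigPoly_eq] at h
    rw [hcast]
    exact h
  have h2' : ∀ k : ℕ, k < 2*N - 1 →
      ‖(pol (dcoef φ)).eval (E ((k : ℝ) / ((2*N-1 : ℕ) : ℝ)))‖ =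
      ‖(pol (dcoef ψ)).eval (E ((k : ℝ) / ((2*N-1 : ℕ) : ℝ)))‖ := by
    intro k hk
    have h := h2 k (by omega)
    rw [trigPolyDeriv_eq, trigPolyDeriv_eq] at h
    simp only [norm_mul, Complex.norm_I, Complex.norm_two, Complex.norm_real, Real.norm_eq_abs, mul_one] at h
    rw [hcast]
    exact mul_left_cancel₀ (by positivity : (2:ℝ) * |Real.pi| ≠ 0) h
  have H1 := samples_to_identity hN φ ψ h1'
  have H2 := samples_to_identity hN (dcoef φ) (dcoef ψ) h2'
  have Hprod := key_product_zero hN φ ψ H1 H2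
  set j0 : Fin N := ⟨0, hN⟩ with hj0def
  rcases mul_eq_zero.mp Hprod with hcase | hcase
  · -- Case 1 : P† R = Q† S
    have hc : pol (scoef φ) * pol (dcoef φ) = pol (scoef ψ) * pol (dcoef ψ) :=
      sub_eq_zero.mp hcase
    rw [← X_mul_derivative_pol φ, ← X_mul_derivative_pol ψ] at hc
    have hcancel : pol (scoef φ) * derivative (pol φ) = pol (scoef ψ) * derivative (pol ψ) := by
      apply mul_left_cancel₀ (Polynomial.X_ne_zero (R := ℂ))
      linear_combination hc
    by_cases hψ0 : pol ψ = 0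
    · have hb0 := pol_eq_zero hψ0
      have hφ0 : ∀ j, φ j = 0 := by
        rw [hψ0, pol_zero_of_all_zero (a := scoef ψ) (fun j => by simp [scoef, hb0])] at H1
        rcases (by simpa using H1 : pol φ = 0 ∨ pol (scoef φ) = 0) with h | h
        · exact pol_eq_zero h
        · intro j
          have := pol_eq_zero h j.rev
          simp only [scoef, Fin.rev_rev] at this
          simpa using congrArg (starRingEnd ℂ) this
      exact ⟨1, by simp, funext fun j => by simp [hb0 j, hφ0 j]⟩
    · have hq'ne : pol (scoef ψ) ≠ 0 := pol_scoef_ne_zero hψ0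
      have hwr : (pol ψ * derivative (pol φ) - pol φ * derivative (pol ψ)) * pol (scoef ψ) = 0 := by
        linear_combination (pol φ) * hcancel - (derivative (pol φ)) * H1
      have hwr' : pol ψ * derivative (pol φ) = pol φ * derivative (pol ψ) := by
        rcases mul_eq_zero.mp hwr with h | h
        · exact sub_eq_zero.mp h
        · exact absurd h hq'ne
      by_cases hφ0 : pol φ = 0
      · exfalso
        rw [hφ0, zero_mul] at H1
        rcases mul_eq_zero.mp H1.symm with h | h
        · exact hψ0 h
        · exact hq'ne h
      · obtain ⟨l, hl⟩ := wronskian_prop (pol φ) (pol ψ) hφ0 hwr'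
        have hcoeffs : ∀ j, ψ j = l * φ j := by
          intro j
          have h' : (pol ψ).coeff ((j : Fin N):ℕ) = (C l * pol φ).coeff ((j : Fin N):ℕ) := by
            rw [hl]
          rw [coeff_C_mul, pol_coeff_fin, pol_coeff_fin] at h'
          exact h'
        have hsc : pol (scoef ψ) = C ((starRingEnd ℂ) l) * pol (scoef φ) := by
          rw [pol, pol, Finset.mul_sum]
          refine Finset.sum_congr rfl fun j _ => ?_
          have hcj : scoef ψ j = (starRingEnd ℂ) l * scoef φ j := by
            simp [scoef, hcoeffs]
          rw [hcj, C_mul]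
          ring
        have hfac : (C (l * (starRingEnd ℂ) l) - 1) * (pol φ * pol (scoef φ)) = 0 := by
          rw [hl, hsc] at H1
          rw [C_mul]
          linear_combination -H1
        have hunit : l * (starRingEnd ℂ) l = 1 := by
          rcases mul_eq_zero.mp hfac with h | h
          · have : C (l * (starRingEnd ℂ) l) = (1 : ℂ[X]) := by
              linear_combination h
            have := congrArg (fun W => W.coeff 0) this
            simpa using this
          · rcases mul_eq_zero.mp h with h' | h'
            · exact absurd h' hφ0
            · exact absurd h' (pol_scoef_ne_zero hφ0)
        have habs : ‖l‖ = 1 := by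
          have hn : Complex.normSq l = 1 := by
            have := hunit
            rw [Complex.mul_conj] at this
            exact_mod_cast this
          have := Complex.sq_norm l
          nlinarith [norm_nonneg l]
        exact ⟨l, habs, funext hcoeffs⟩
  · -- Case 2 : P† R = - Q S†
    have hc2 : pol (scoef φ) * pol (dcoef φ) = -(pol ψ * pol (scoef (dcoef ψ))) := by
      linear_combination hcase
    have hL := congrArg (fun W => W.coeff (N-1)) hc2
    simp only [coeff_neg] at hL
    rw [coeff_mul_pol hN, coeff_mul_pol hN] at hL
    have hLrew : ∑ j : Fin N, scoef φ j * dcoef φ j.rev =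
        ((∑ j : Fin N, ((j:ℕ):ℝ) * Complex.normSq (φ j) : ℝ) : ℂ) := by
      rw [← Equiv.sum_comp Fin.revPerm (fun j => scoef φ j * dcoef φ j.rev)]
      push_cast
      refine Finset.sum_congr rfl fun j _ => ?_
      simp only [Fin.revPerm_apply, scoef, dcoef, Fin.rev_rev]
      rw [← Complex.mul_conj]
      ring
    have hRrew : ∑ j : Fin N, ψ j * scoef (dcoef ψ) j.rev =
        ((∑ j : Fin N, ((j:ℕ):ℝ) * Complex.normSq (ψ j) : ℝ) : ℂ) := by
      push_cast
      refine Finset.sum_congr rfl fun j _ => ?_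
      simp only [scoef, dcoef, Fin.rev_rev, map_mul, Complex.conj_natCast]
      rw [← Complex.mul_conj]
      ring
    rw [hLrew, hRrew] at hL
    have hsum : (∑ j : Fin N, ((j:ℕ):ℝ) * Complex.normSq (φ j)) =
        -(∑ j : Fin N, ((j:ℕ):ℝ) * Complex.normSq (ψ j)) := by
      exact_mod_cast hL
    have hnonnegA : ∀ j ∈ Finset.univ (α := Fin N), (0:ℝ) ≤ ((j:ℕ):ℝ) * Complex.normSq (φ j) :=
      fun j _ => mul_nonneg (by positivity) (Complex.normSq_nonneg _)
    have hnonnegB : ∀ j ∈ Finset.univ (α := Fin N), (0:ℝ) ≤ ((j:ℕ):ℝ) * Complex.normSq (ψ j) :=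
      fun j _ => mul_nonneg (by positivity) (Complex.normSq_nonneg _)
    have hA0 : ∑ j : Fin N, ((j:ℕ):ℝ) * Complex.normSq (φ j) = 0 := by
      have h1 := Finset.sum_nonneg hnonnegA
      have h2 := Finset.sum_nonneg hnonnegB
      linarith
    have hB0 : ∑ j : Fin N, ((j:ℕ):ℝ) * Complex.normSq (ψ j) = 0 := by
      have h1 := Finset.sum_nonneg hnonnegA
      linarith
    have hAz := (Finset.sum_eq_zero_iff_of_nonneg hnonnegA).mp hA0
    have hBz := (Finset.sum_eq_zero_iff_of_nonneg hnonnegB).mp hB0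
    have hφz : ∀ j : Fin N, (j:ℕ) ≠ 0 → φ j = 0 := by
      intro j hj
      have := hAz j (Finset.mem_univ j)
      rcases mul_eq_zero.mp this with h | h
      · exact absurd (by exact_mod_cast h) hj
      · exact Complex.normSq_eq_zero.mp h
    have hψz : ∀ j : Fin N, (j:ℕ) ≠ 0 → ψ j = 0 := by
      intro j hj
      have := hBz j (Finset.mem_univ j)
      rcases mul_eq_zero.mp this with h | h
      · exact absurd (by exact_mod_cast h) hj
      · exact Complex.normSq_eq_zero.mp h
    -- total energy from H1
    have hT := congrArg (fun W => W.coeff (N-1)) H1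
    rw [coeff_mul_pol hN, coeff_mul_pol hN] at hT
    have hTrew : ∀ a : Fin N → ℂ, ∑ j : Fin N, a j * scoef a j.rev =
        ((∑ j : Fin N, Complex.normSq (a j) : ℝ) : ℂ) := by
      intro a
      push_cast
      refine Finset.sum_congr rfl fun j _ => ?_
      simp only [scoef, Fin.rev_rev]
      rw [← Complex.mul_conj]
    rw [hTrew, hTrew] at hT
    have hTsum : (∑ j : Fin N, Complex.normSq (φ j)) = ∑ j : Fin N, Complex.normSq (ψ j) := by
      exact_mod_cast hT
    have hsingA : ∑ j : Fin N, Complex.normSq (φ j) = Complex.normSq (φ j0) := by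
      apply Finset.sum_eq_single j0
      · intro j _ hj
        have : (j:ℕ) ≠ 0 := by
          intro h
          apply hj
          ext
          simpa [hj0def] using h
        rw [hφz j this]
        simp
      · simp
    have hsingB : ∑ j : Fin N, Complex.normSq (ψ j) = Complex.normSq (ψ j0) := by
      apply Finset.sum_eq_single j0
      · intro j _ hj
        have : (j:ℕ) ≠ 0 := by
          intro h
          apply hj
          ext
          simpa [hj0def] using h
        rw [hψz j this]
        simp
      · simp
    have hns : Complex.normSq (φ j0) = Complex.normSq (ψ j0) := by
      rw [← hsingA, ← hsingB]; exact hTsum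
    by_cases hφ0 : φ j0 = 0
    · have hψ0 : ψ j0 = 0 := by
        apply Complex.normSq_eq_zero.mp
        rw [← hns, hφ0]
        simp
      refine ⟨1, by simp, funext fun j => ?_⟩
      by_cases hj : (j:ℕ) = 0
      · have : j = j0 := by ext; simpa [hj0def] using hj
        rw [this, hψ0, hφ0]
        simp
      · rw [hφz j hj, hψz j hj]
        simp
    · refine ⟨ψ j0 / φ j0, ?_, funext fun j => ?_⟩
      · rw [norm_div]
        rw [div_eq_one_iff_eq (by simpa using hφ0)]
        have habs : ‖φ j0‖ = ‖ψ j0‖ := by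
          have := congrArg Real.sqrt hns
          rwa [Complex.normSq_eq_norm_sq, Complex.normSq_eq_norm_sq, Real.sqrt_sq (norm_nonneg _), Real.sqrt_sq (norm_nonneg _)] at this
        exact habs.symm
      · by_cases hj : (j:ℕ) = 0
        · have : j = j0 := by ext; simpa [hj0def] using hj
          rw [this]
          field_simp
        · rw [hφz j hj, hψz j hj]
          simp
end

section
/- Let N = 2m+1 be an odd integer with N ≥ 3. Then there exist φ, ψ ∈ ℂ^N such that |P_φ(k/(2N−2))| = |P_ψ(k/(2N−2))| and |P_φ′(k/(2N−2))| = |P_ψ′(k/(2N−2))| for every k = 0, 1, …, 2N−3, and yet there is no λ ∈ ℂ with |λ| = 1 and ψ = λ·φ. -/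
open Real

lemma sum_support_two {M : Type*} [AddCommMonoid M] {N : ℕ} (i0 i1 : Fin N)
    (h : i0 ≠ i1) (f : Fin N → M) (hf : ∀ j, j ≠ i0 → j ≠ i1 → f j = 0) :
    ∑ j, f j = f i0 + f i1 := by
  rw [← Finset.sum_pair h]
  refine (Finset.sum_subset (Finset.subset_univ _) ?_).symm
  intro x _ hx
  simp only [Finset.mem_insert, Finset.mem_singleton, not_or] at hx
  exact hf x hx.1 hx.2

theorem undersampled_modulus_and_deriv_counterexample
    (N m : ℕ) (hNm : N = 2 * m + 1) (hN : 3 ≤ N) :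
    ∃ φ ψ : Fin N → ℂ,
      (∀ k : ℕ, k ≤ 2 * N - 3 →
        ‖trigPoly φ (k / (2 * N - 2))‖
          = ‖trigPoly ψ (k / (2 * N - 2))‖) ∧
      (∀ k : ℕ, k ≤ 2 * N - 3 →
        ‖trigPolyDeriv φ (k / (2 * N - 2))‖
          = ‖trigPolyDeriv ψ (k / (2 * N - 2))‖) ∧
      ¬ ∃ l : ℂ, ‖l‖ = 1 ∧ ψ = fun j => l * φ j := by
  have hN0 : 0 < N := by omega
  have hN1 : N - 1 < N := by omega
  set i0 : Fin N := ⟨0, hN0⟩ with hi0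
  set i1 : Fin N := ⟨N - 1, hN1⟩ with hi1
  have hne : i0 ≠ i1 := by
    simp only [Fin.ne_iff_vne, hi0, hi1]
    omega
  set φ : Fin N → ℂ := fun j => if j = i0 then 1 else if j = i1 then Complex.I else 0 with hφ
  set ψ : Fin N → ℂ := fun j => if j = i0 then 1 else if j = i1 then -Complex.I else 0 with hψ
  -- the exponential at frequency N-1 and point k/(2N-2) is (-1)^k
  have h2N : ((2 : ℂ) * N - 2) ≠ 0 := by
    intro h
    have h1 : (N : ℂ) = 1 := by linear_combination h / 2
    have h2 : (N : ℕ) = 1 := by exact_mod_cast h1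
    omega
  have key : ∀ k : ℕ,
      Complex.exp (2 * Real.pi * Complex.I * ((N - 1 : ℕ) : ℂ)
        * ((k / (2 * N - 2) : ℝ) : ℂ)) = (-1 : ℂ) ^ k := by
    intro k
    have hcast : ((N - 1 : ℕ) : ℂ) = (N : ℂ) - 1 := by
      push_cast [Nat.one_le_iff_ne_zero.mpr (by omega : N ≠ 0)]
      ring
    have hx : ((k / (2 * N - 2) : ℝ) : ℂ) = (k : ℂ) / (2 * N - 2) := by
      push_cast
      ring
    rw [hcast, hx]
    have : (2 : ℂ) * Real.pi * Complex.I * ((N : ℂ) - 1) * ((k : ℂ) / (2 * N - 2))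
        = (k : ℕ) * ((Real.pi : ℂ) * Complex.I) := by
      have h3 : (N : ℂ) - 1 ≠ 0 := fun h => h2N (by linear_combination 2 * h)
      field_simp
    rw [this, Complex.exp_nat_mul, Complex.exp_pi_mul_I]
  have hval0 : ((i0 : ℕ) : ℂ) = 0 := by simp [hi0]
  have hexp0 : ∀ x : ℝ, Complex.exp (2 * Real.pi * Complex.I * ((i0 : ℕ) : ℂ) * x) = 1 := by
    intro x
    rw [hval0]
    simp
  have hi1val : ((i1 : ℕ) : ℕ) = N - 1 := rfl
  -- values of trigPoly
  have hPφ : ∀ k : ℕ, trigPoly φ (k / (2 * N - 2)) = 1 + Complex.I * (-1 : ℂ) ^ k := by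
    intro k
    rw [trigPoly, sum_support_two i0 i1 hne _
      (fun j hj0 hj1 => by simp [hφ, hj0, hj1])]
    simp only [hφ, if_pos rfl, if_neg hne.symm, if_neg hne, if_pos rfl, if_true, eq_self_iff_true]
    rw [hexp0, key k]
    ring
  have hPψ : ∀ k : ℕ, trigPoly ψ (k / (2 * N - 2)) = 1 - Complex.I * (-1 : ℂ) ^ k := by
    intro k
    rw [trigPoly, sum_support_two i0 i1 hne _
      (fun j hj0 hj1 => by simp [hψ, hj0, hj1])]
    simp only [hψ, if_pos rfl, if_neg hne.symm, if_neg hne, if_pos rfl, if_true, eq_self_iff_true]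
    rw [hexp0, key k]
    ring
  -- values of trigPolyDeriv
  have hDφ : ∀ k : ℕ, trigPolyDeriv φ (k / (2 * N - 2))
      = 2 * Real.pi * Complex.I * ((N - 1 : ℕ) : ℂ) * Complex.I * (-1 : ℂ) ^ k := by
    intro k
    rw [trigPolyDeriv, sum_support_two i0 i1 hne _
      (fun j hj0 hj1 => by simp [hφ, hj0, hj1])]
    simp only [hφ, if_pos rfl, if_neg hne.symm, if_neg hne, if_pos rfl, if_true, eq_self_iff_true]
    rw [hexp0, key k]
    ring
  have hDψ : ∀ k : ℕ, trigPolyDeriv ψ (k / (2 * N - 2))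
      = -(2 * Real.pi * Complex.I * ((N - 1 : ℕ) : ℂ) * Complex.I * (-1 : ℂ) ^ k) := by
    intro k
    rw [trigPolyDeriv, sum_support_two i0 i1 hne _
      (fun j hj0 hj1 => by simp [hψ, hj0, hj1])]
    simp only [hψ, if_pos rfl, if_neg hne.symm, if_neg hne, if_pos rfl, if_true, eq_self_iff_true]
    rw [hexp0, key k]
    ring
  refine ⟨φ, ψ, ?_, ?_, ?_⟩
  · intro k _
    rw [hPφ k, hPψ k]
    rcases Nat.even_or_odd k with hk | hk
    · rw [hk.neg_one_pow]
      simp [Complex.norm_def, Complex.normSq_apply]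
    · rw [hk.neg_one_pow]
      simp [Complex.norm_def, Complex.normSq_apply]
  · intro k _
    rw [hDφ k, hDψ k, norm_neg]
  · rintro ⟨l, hl, hlf⟩
    have h0 : ψ i0 = l * φ i0 := by rw [hlf]
    have h1 : ψ i1 = l * φ i1 := by rw [hlf]
    simp only [hφ, hψ, if_pos rfl, if_neg hne.symm, if_pos rfl, if_true, eq_self_iff_true] at h0 h1
    rw [mul_one] at h0
    rw [← h0, one_mul] at h1
    have : Complex.I = 0 := by linear_combination -h1 / 2
    exact Complex.I_ne_zero this
end

section
/- Let N ≥ 1 and let φ, ψ ∈ ℂ^N. Assume that for every k = 0, 1, …, 2N−2: |P_φ(k/(2N−1))| = |P_ψ(k/(2N−1))| and |P_φ((k+1)/(2N−1)) − P_φ(k/(2N−1))| = |P_ψ((k+1)/(2N−1)) − P_ψ(k/(2N−1))|. Then there exists λ ∈ ℂ with |λ| = 1 such that ψ = λ·φ. -/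
open Real

namespace PRaux

open Polynomial Complex Finset

/-- Vanishing lemma: a polynomial of degree < M vanishing at all powers of a
primitive M-th root of unity is zero. -/
lemma van {M : ℕ} (hM : M ≠ 0) {ω : ℂ} (hω : IsPrimitiveRoot ω M) {p : ℂ[X]}
    (hdeg : p.natDegree < M) (h : ∀ k < M, p.eval (ω ^ k) = 0) : p = 0 := by
  have hinj : Function.Injective (fun k : Fin M => ω ^ (k : ℕ)) := by
    intro a b hab
    exact Fin.ext (hω.pow_inj a.2 b.2 hab)
  refine Polynomial.eq_zero_of_natDegree_lt_card_of_eval_eq_zero p hinj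
    (fun i => h i i.2) ?_
  simpa using hdeg

/-- Discrete Fourier inversion. -/
lemma dft {M : ℕ} (hM : M ≠ 0) {ω : ℂ} (hω : IsPrimitiveRoot ω M) (c : ℕ → ℂ)
    (h : ∀ k < M, ∑ t ∈ Finset.range M, c t * ω ^ (k * t) = 0) :
    ∀ t < M, c t = 0 := by
  set p : ℂ[X] := ∑ t ∈ Finset.range M, C (c t) * X ^ t with hp
  have hco : ∀ t, t < M → p.coeff t = c t := by
    intro t ht
    rw [hp, finset_sum_coeff]
    rw [Finset.sum_eq_single t]
    · simp
    · intro b _ hbt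
      simp [coeff_C_mul, coeff_X_pow, Ne.symm hbt]
    · intro hcon
      exact absurd (Finset.mem_range.2 ht) hcon
  have hdeg : p.natDegree < M := by
    have : p.natDegree ≤ M - 1 := by
      apply Polynomial.natDegree_sum_le_of_forall_le
      intro i hi
      refine (Polynomial.natDegree_C_mul_le _ _).trans ?_
      simp only [natDegree_X_pow]
      have := Finset.mem_range.1 hi
      omega
    omega
  have hz : p = 0 := by
    refine van hM hω hdeg ?_
    intro k hk
    rw [hp]
    simp only [eval_finset_sum, eval_mul, eval_C, eval_pow, eval_X]
    have := h k hk
    rw [← this]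
    refine Finset.sum_congr rfl (fun t ht => ?_)
    rw [← pow_mul]
  intro t ht
  rw [← hco t ht, hz, coeff_zero]

section defs

variable (N : ℕ) (ω : ℂ)

/-- extend a vector by zero -/
noncomputable def extN (v : Fin N → ℂ) : ℕ → ℂ := fun t => if h : t < N then v ⟨t, h⟩ else 0

/-- the polynomial `∑ v<sub>j</sub> ω^{kj} X^j` -/
noncomputable def PP (v : Fin N → ℂ) (k : ℕ) : ℂ[X] :=
  ∑ j : Fin N, C (v j * ω ^ (k * (j : ℕ))) * X ^ (j : ℕ)

/-- the reversed conjugate polynomial `∑ conj(v_j ω^{kj}) X^{N-1-j}` -/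
noncomputable def SS (v : Fin N → ℂ) (k : ℕ) : ℂ[X] :=
  ∑ j : Fin N, C ((starRingEnd ℂ) (v j * ω ^ (k * (j : ℕ)))) * X ^ (N - 1 - (j : ℕ))

variable {N ω}

lemma extN_coe (v : Fin N → ℂ) (j : Fin N) : extN N v (j : ℕ) = v j := by
  simp [extN]

lemma coeff_PP (v : Fin N → ℂ) (k t : ℕ) :
    (PP N ω v k).coeff t = extN N v t * ω ^ (k * t) := by
  rw [PP, finset_sum_coeff]
  simp only [coeff_C_mul, coeff_X_pow]
  by_cases h : t < N
  · rw [Finset.sum_eq_single (⟨t, h⟩ : Fin N)]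
    · simp [extN, h]
    · intro b _ hbt
      have : t ≠ (b : ℕ) := by
        intro hc; exact hbt (by apply Fin.ext; simp [← hc])
      simp [this]
    · simp
  · rw [Finset.sum_eq_zero, extN, dif_neg h, zero_mul]
    intro b _
    have : t ≠ (b : ℕ) := by
      have := b.2; omega
    simp [this]

lemma coeff_SS (v : Fin N → ℂ) (k t : ℕ) :
    (SS N ω v k).coeff t =
      if t < N then (starRingEnd ℂ) (extN N v (N - 1 - t) * ω ^ (k * (N - 1 - t))) else 0 := by
  rw [SS, finset_sum_coeff]
  simp only [coeff_C_mul, coeff_X_pow]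
  by_cases h : t < N
  · have hlt : N - 1 - t < N := by omega
    rw [Finset.sum_eq_single (⟨N - 1 - t, hlt⟩ : Fin N)]
    · simp only [if_pos h]
      have : N - 1 - (N - 1 - t) = t := by omega
      simp [extN, hlt, this]
    · intro b _ hbt
      have : t ≠ N - 1 - (b : ℕ) := by
        intro hc
        apply hbt
        apply Fin.ext
        have := b.2
        simp only []
        omega
      simp [this]
    · simp
  · rw [Finset.sum_eq_zero, if_neg h]
    intro b _
    have : t ≠ N - 1 - (b : ℕ) := by have := b.2; omega
    simp [this]

end defs

section evalcomp

variable {N : ℕ} {ω : ℂ}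

lemma conj_ne' {z : ℂ} (h : z ≠ 0) : (starRingEnd ℂ) z ≠ 0 := by
  simp only [ne_eq, _root_.map_eq_zero]
  exact h

lemma pow_conj_cancel (hcω : (starRingEnd ℂ) ω * ω = 1) (s : ℕ) :
    (starRingEnd ℂ) (ω ^ s) * ω ^ s = 1 := by
  rw [map_pow, ← mul_pow, hcω, one_pow]

lemma pow_sub_eq (hcω : (starRingEnd ℂ) ω * ω = 1) {j s : ℕ} (hj : j ≤ s) :
    ω ^ s * (starRingEnd ℂ) (ω ^ j) = ω ^ (s - j) := by
  have h : ω ^ s = ω ^ (s - j) * ω ^ j := by rw [← pow_add]; congr 1; omega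
  rw [h, mul_assoc, mul_comm (ω ^ j), pow_conj_cancel hcω, mul_one]

/-- evaluation of the base function -/
noncomputable def gg (v : Fin N → ℂ) (z : ℂ) : ℂ := ∑ j : Fin N, v j * z ^ (j : ℕ)

lemma eval_PP (v : Fin N → ℂ) (l k : ℕ) :
    (PP N ω v l).eval (ω ^ k) = gg v (ω ^ (l + k)) := by
  rw [PP, eval_finset_sum, gg]
  refine Finset.sum_congr rfl (fun j _ => ?_)
  rw [eval_mul, eval_C, eval_pow, eval_X, mul_assoc, ← pow_mul, ← pow_add, ← pow_mul]
  congr 2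
  ring

lemma eval_SS (hcω : (starRingEnd ℂ) ω * ω = 1) (v : Fin N → ℂ) (l k : ℕ) :
    (SS N ω v l).eval (ω ^ k) = ω ^ (k * (N - 1)) * (starRingEnd ℂ) (gg v (ω ^ (l + k))) := by
  rw [SS, eval_finset_sum, gg, map_sum, Finset.mul_sum]
  refine Finset.sum_congr rfl (fun j _ => ?_)
  have hj : (j : ℕ) ≤ N - 1 := by have := j.2; omega
  have hsplit : (ω ^ (l + k)) ^ (j : ℕ) = ω ^ (l * (j : ℕ)) * ω ^ (k * (j : ℕ)) := by
    rw [← pow_add, ← pow_mul]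
    congr 1
    ring
  have key : (ω ^ k) ^ (N - 1 - (j : ℕ))
      = ω ^ (k * (N - 1)) * (starRingEnd ℂ) (ω ^ (k * (j : ℕ))) := by
    rw [pow_sub_eq hcω (Nat.mul_le_mul (le_refl k) hj), ← pow_mul, Nat.mul_sub]
  rw [eval_mul, eval_C, eval_pow, eval_X, hsplit, key, map_mul, map_mul]
  simp only [map_mul]
  ring

lemma comp_PP (v : Fin N → ℂ) (k : ℕ) :
    (PP N ω v k).comp (C ω * X) = PP N ω v (k + 1) := by
  rw [PP, PP]
  simp only [Polynomial.comp, eval₂_finset_sum, eval₂_mul, eval₂_C, eval₂_X_pow]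
  refine Finset.sum_congr rfl (fun j _ => ?_)
  have hexp : (k + 1) * (j:ℕ) = k * (j:ℕ) + (j:ℕ) := by ring
  simp only [hexp, pow_add, C_mul, mul_pow, C_pow]
  ring

lemma comp_SS (hcω : (starRingEnd ℂ) ω * ω = 1) (v : Fin N → ℂ) (k : ℕ) :
    (SS N ω v k).comp (C ω * X) = C (ω ^ (N - 1)) * SS N ω v (k + 1) := by
  rw [SS, SS, Finset.mul_sum]
  simp only [Polynomial.comp, eval₂_finset_sum, eval₂_mul, eval₂_C, eval₂_X_pow]
  refine Finset.sum_congr rfl (fun j _ => ?_)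
  have hj : (j : ℕ) ≤ N - 1 := by have := j.2; omega
  have key : ω ^ (N - 1 - (j:ℕ)) = ω ^ (N - 1) * (starRingEnd ℂ) (ω ^ (j:ℕ)) :=
    (pow_sub_eq hcω hj).symm
  have hexp : (k + 1) * (j:ℕ) = k * (j:ℕ) + (j:ℕ) := by ring
  simp only [hexp, pow_add, mul_pow, ← C_pow, key, map_mul, C_mul]
  ring

end evalcomp

section degrees

variable {N : ℕ} {ω : ℂ} {v : Fin N → ℂ}

lemma coeff_PP0 (v : Fin N → ℂ) (t : ℕ) : (PP N ω v 0).coeff t = extN N v t := by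
  rw [coeff_PP]
  simp

lemma PP_ne_zero (hω0 : ω ≠ 0) (hv : v ≠ 0) (k : ℕ) : PP N ω v k ≠ 0 := by
  obtain ⟨j, hj⟩ := Function.ne_iff.1 hv
  intro h0
  have h := coeff_PP (N := N) (ω := ω) v k (j : ℕ)
  rw [h0, coeff_zero, extN_coe] at h
  rcases mul_eq_zero.1 h.symm with h' | h'
  · exact hj h'
  · exact pow_ne_zero _ hω0 h'

lemma natDegree_PP_le : (PP N ω v k).natDegree ≤ N - 1 := by
  rw [natDegree_le_iff_coeff_eq_zero]
  intro m hm
  have hmN : ¬ m < N := by omega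
  rw [coeff_PP, extN, dif_neg hmN, zero_mul]

lemma natDegree_SS_le : (SS N ω v k).natDegree ≤ N - 1 := by
  rw [natDegree_le_iff_coeff_eq_zero]
  intro m hm
  have hmN : ¬ m < N := by omega
  rw [coeff_SS, if_neg hmN]

lemma natDegree_PP (hω0 : ω ≠ 0) (hv : v ≠ 0) (k : ℕ) :
    (PP N ω v k).natDegree = (PP N ω v 0).natDegree := by
  apply le_antisymm
  · rw [natDegree_le_iff_coeff_eq_zero]
    intro m hm
    have h0 : extN N v m = 0 := by
      rw [← coeff_PP0 (ω := ω)]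
      exact coeff_eq_zero_of_natDegree_lt hm
    rw [coeff_PP, h0, zero_mul]
  · apply le_natDegree_of_ne_zero
    rw [coeff_PP, ← coeff_PP0 (ω := ω)]
    exact mul_ne_zero (leadingCoeff_ne_zero.2 (PP_ne_zero hω0 hv 0)) (pow_ne_zero _ hω0)

lemma leadingCoeff_PP (hω0 : ω ≠ 0) (hv : v ≠ 0) (k : ℕ) :
    (PP N ω v k).leadingCoeff
      = extN N v ((PP N ω v 0).natDegree) * ω ^ (k * (PP N ω v 0).natDegree) := by
  rw [leadingCoeff, natDegree_PP hω0 hv k, coeff_PP]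

lemma natTrailingDegree_PP (hω0 : ω ≠ 0) (hv : v ≠ 0) (k : ℕ) :
    (PP N ω v k).natTrailingDegree = (PP N ω v 0).natTrailingDegree := by
  apply le_antisymm
  · apply natTrailingDegree_le_of_ne_zero
    rw [coeff_PP, ← coeff_PP0 (ω := ω)]
    exact mul_ne_zero (trailingCoeff_nonzero_iff_nonzero.2 (PP_ne_zero hω0 hv 0))
      (pow_ne_zero _ hω0)
  · apply le_natTrailingDegree (PP_ne_zero hω0 hv k)
    intro m hm
    have h0 : extN N v m = 0 := by
      rw [← coeff_PP0 (ω := ω)]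
      exact coeff_eq_zero_of_lt_natTrailingDegree hm
    rw [coeff_PP, h0, zero_mul]

lemma trailingCoeff_PP (hω0 : ω ≠ 0) (hv : v ≠ 0) (k : ℕ) :
    (PP N ω v k).trailingCoeff
      = extN N v ((PP N ω v 0).natTrailingDegree) * ω ^ (k * (PP N ω v 0).natTrailingDegree) := by
  rw [trailingCoeff, natTrailingDegree_PP hω0 hv k, coeff_PP]

lemma extN_D_ne (hω0 : ω ≠ 0) (hv : v ≠ 0) : extN N v ((PP N ω v 0).natDegree) ≠ 0 := by
  rw [← coeff_PP0 (ω := ω)]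
  exact leadingCoeff_ne_zero.2 (PP_ne_zero hω0 hv 0)

lemma extN_T_ne (hω0 : ω ≠ 0) (hv : v ≠ 0) : extN N v ((PP N ω v 0).natTrailingDegree) ≠ 0 := by
  rw [← coeff_PP0 (ω := ω)]
  exact trailingCoeff_nonzero_iff_nonzero.2 (PP_ne_zero hω0 hv 0)

lemma T_le_D_aux (hω0 : ω ≠ 0) (hv : v ≠ 0) :
    (PP N ω v 0).natTrailingDegree ≤ (PP N ω v 0).natDegree :=
  natTrailingDegree_le_natDegree _

lemma natDegree_SS (hN : 0 < N) (hω0 : ω ≠ 0) (hv : v ≠ 0) (k : ℕ) :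
    (SS N ω v k).natDegree = N - 1 - (PP N ω v 0).natTrailingDegree := by
  have hT : (PP N ω v 0).natTrailingDegree ≤ N - 1 :=
    le_trans (natTrailingDegree_le_natDegree _) natDegree_PP_le
  apply le_antisymm
  · rw [natDegree_le_iff_coeff_eq_zero]
    intro m hm
    rw [coeff_SS]
    by_cases hmN : m < N
    · rw [if_pos hmN]
      have h0 : extN N v (N - 1 - m) = 0 := by
        rw [← coeff_PP0 (ω := ω)]
        exact coeff_eq_zero_of_lt_natTrailingDegree (by omega)
      rw [h0, zero_mul, map_zero]
    · rw [if_neg hmN]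
  · apply le_natDegree_of_ne_zero
    rw [coeff_SS, if_pos (by omega : N - 1 - (PP N ω v 0).natTrailingDegree < N)]
    have he : N - 1 - (N - 1 - (PP N ω v 0).natTrailingDegree)
        = (PP N ω v 0).natTrailingDegree := by omega
    rw [he]
    exact conj_ne' (mul_ne_zero (extN_T_ne hω0 hv) (pow_ne_zero _ hω0))

lemma leadingCoeff_SS (hN : 0 < N) (hω0 : ω ≠ 0) (hv : v ≠ 0) (k : ℕ) :
    (SS N ω v k).leadingCoeff
      = (starRingEnd ℂ) (extN N v ((PP N ω v 0).natTrailingDegree)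
          * ω ^ (k * (PP N ω v 0).natTrailingDegree)) := by
  have hT : (PP N ω v 0).natTrailingDegree ≤ N - 1 :=
    le_trans (natTrailingDegree_le_natDegree _) natDegree_PP_le
  rw [leadingCoeff, natDegree_SS hN hω0 hv k, coeff_SS, if_pos (by omega : N - 1 - (PP N ω v 0).natTrailingDegree < N)]
  have he : N - 1 - (N - 1 - (PP N ω v 0).natTrailingDegree)
      = (PP N ω v 0).natTrailingDegree := by omega
  rw [he]

lemma SS_ne_zero (hN : 0 < N) (hω0 : ω ≠ 0) (hv : v ≠ 0) (k : ℕ) : SS N ω v k ≠ 0 := by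
  intro h0
  have := leadingCoeff_SS hN hω0 hv k
  rw [h0, leadingCoeff_zero] at this
  exact conj_ne' (mul_ne_zero (extN_T_ne hω0 hv) (pow_ne_zero _ hω0)) this.symm

lemma natTrailingDegree_SS (hN : 0 < N) (hω0 : ω ≠ 0) (hv : v ≠ 0) (k : ℕ) :
    (SS N ω v k).natTrailingDegree = N - 1 - (PP N ω v 0).natDegree := by
  have hD : (PP N ω v 0).natDegree ≤ N - 1 := natDegree_PP_le
  apply le_antisymm
  · apply natTrailingDegree_le_of_ne_zero
    rw [coeff_SS, if_pos (by omega : N - 1 - (PP N ω v 0).natDegree < N)]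
    have he : N - 1 - (N - 1 - (PP N ω v 0).natDegree) = (PP N ω v 0).natDegree := by omega
    rw [he]
    exact conj_ne' (mul_ne_zero (extN_D_ne hω0 hv) (pow_ne_zero _ hω0))
  · apply le_natTrailingDegree (SS_ne_zero hN hω0 hv k)
    intro m hm
    rw [coeff_SS, if_pos (by omega : m < N)]
    have h0 : extN N v (N - 1 - m) = 0 := by
      rw [← coeff_PP0 (ω := ω)]
      exact coeff_eq_zero_of_natDegree_lt (by omega)
    rw [h0, zero_mul, map_zero]

lemma trailingCoeff_SS (hN : 0 < N) (hω0 : ω ≠ 0) (hv : v ≠ 0) (k : ℕ) :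
    (SS N ω v k).trailingCoeff
      = (starRingEnd ℂ) (extN N v ((PP N ω v 0).natDegree)
          * ω ^ (k * (PP N ω v 0).natDegree)) := by
  have hD : (PP N ω v 0).natDegree ≤ N - 1 := natDegree_PP_le
  rw [trailingCoeff, natTrailingDegree_SS hN hω0 hv k, coeff_SS, if_pos (by omega : N - 1 - (PP N ω v 0).natDegree < N)]
  have he : N - 1 - (N - 1 - (PP N ω v 0).natDegree) = (PP N ω v 0).natDegree := by omega
  rw [he]

end degrees

section helpers

lemma mulconj_eq {a b : ℂ} (h : ‖a‖ = ‖b‖) :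
    a * (starRingEnd ℂ) a = b * (starRingEnd ℂ) b := by
  rw [Complex.mul_conj, Complex.mul_conj]
  norm_cast
  rw [← Complex.sq_norm, ← Complex.sq_norm, h]

lemma abs_one_of_mul_conj {l : ℂ} (h : l * (starRingEnd ℂ) l = 1) : ‖l‖ = 1 := by
  have h2 : Complex.normSq l = 1 := by
    have hm := Complex.mul_conj l
    rw [hm] at h
    exact_mod_cast h
  rw [Complex.norm_def, h2, Real.sqrt_one]

lemma coeffN1 {N : ℕ} {ω : ℂ} (hN : 0 < N) (v : Fin N → ℂ) :
    (PP N ω v 0 * SS N ω v 0).coeff (N - 1) = ∑ j : Fin N, v j * (starRingEnd ℂ) (v j) := by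
  rw [coeff_mul, Finset.Nat.sum_antidiagonal_eq_sum_range_succ_mk]
  have hN1 : (N - 1).succ = N := by omega
  rw [hN1, ← Fin.sum_univ_eq_sum_range
    (fun i => (PP N ω v 0).coeff i * (SS N ω v 0).coeff (N - 1 - i)) N]
  refine Finset.sum_congr rfl (fun j _ => ?_)
  have hj : (j : ℕ) < N := j.2
  rw [coeff_PP0, extN_coe, coeff_SS, if_pos (by omega : N - 1 - (j:ℕ) < N)]
  have he : N - 1 - (N - 1 - (j:ℕ)) = (j:ℕ) := by omega
  rw [he]
  simp [extN_coe]

end helpers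

end PRaux

open PRaux Polynomial Finset in
theorem samples_modulus_and_discrete_deriv_modulus_determine
    (N : ℕ) (hN : 1 ≤ N) (φ ψ : Fin N → ℂ)
    (h1 : ∀ k : ℕ, k ≤ 2 * N - 2 →
      ‖trigPoly φ (k / (2 * N - 1))‖
        = ‖trigPoly ψ (k / (2 * N - 1))‖)
    (h2 : ∀ k : ℕ, k ≤ 2 * N - 2 →
      ‖trigPoly φ ((k + 1) / (2 * N - 1)) - trigPoly φ (k / (2 * N - 1))‖
        = ‖trigPoly ψ ((k + 1) / (2 * N - 1)) - trigPoly ψ (k / (2 * N - 1))‖) :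
    ∃ l : ℂ, ‖l‖ = 1 ∧ ψ = fun j => l * φ j := by
  classical
  have hNpos : 0 < N := hN
  set Mn : ℕ := 2 * N - 1 with hMndef
  have hMn0 : Mn ≠ 0 := by omega
  set ω : ℂ := Complex.exp (2 * (Real.pi : ℂ) * Complex.I / (Mn : ℂ)) with hωdef
  have hprim : IsPrimitiveRoot ω Mn := Complex.isPrimitiveRoot_exp Mn hMn0
  have hω0 : ω ≠ 0 := by rw [hωdef]; exact Complex.exp_ne_zero _
  have habsω : ‖ω‖ = 1 := by
    have : ω = Complex.exp ((2 * Real.pi / Mn : ℝ) * Complex.I) := by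
      rw [hωdef]; congr 1; push_cast; ring
    rw [this, Complex.norm_exp_ofReal_mul_I]
  have hcω : (starRingEnd ℂ) ω * ω = 1 := by
    rw [mul_comm, Complex.mul_conj]
    norm_cast
    rw [Complex.normSq_eq_norm_sq, habsω]
    norm_num
  have hC : (Mn : ℂ) = 2 * (N : ℂ) - 1 := by
    rw [hMndef]
    push_cast [Nat.cast_sub (by omega : 1 ≤ 2 * N)]
    ring
  have hCne : 2 * (N : ℂ) - 1 ≠ 0 := by
    rw [← hC]
    exact_mod_cast Nat.cast_ne_zero.2 hMn0
  -- translation of samples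
  have ht : ∀ (v : Fin N → ℂ) (k : ℕ),
      trigPoly v ((k : ℝ) / (2 * (N : ℝ) - 1)) = gg v (ω ^ k) := by
    intro v k
    unfold trigPoly PRaux.gg
    refine Finset.sum_congr rfl (fun j _ => ?_)
    congr 1
    rw [← pow_mul, hωdef, ← Complex.exp_nat_mul]
    congr 1
    push_cast
    rw [hC]
    field_simp
  -- modulus equalities on the grid
  have habs1 : ∀ k < Mn,
      gg φ (ω ^ k) * (starRingEnd ℂ) (gg φ (ω ^ k))
        = gg ψ (ω ^ k) * (starRingEnd ℂ) (gg ψ (ω ^ k)) := by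
    intro k hk
    have h := h1 k (by omega)
    rw [ht φ k, ht ψ k] at h
    exact mulconj_eq h
  have habs1' : ∀ k ≤ Mn,
      gg φ (ω ^ k) * (starRingEnd ℂ) (gg φ (ω ^ k))
        = gg ψ (ω ^ k) * (starRingEnd ℂ) (gg ψ (ω ^ k)) := by
    intro k hk
    rcases lt_or_eq_of_le hk with h | h
    · exact habs1 k h
    · have e : ω ^ k = ω ^ 0 := by rw [h, hprim.pow_eq_one, pow_zero]
      rw [e]
      exact habs1 0 (by omega)
  have hcross : ∀ k < Mn,
      gg φ (ω ^ (k+1)) * (starRingEnd ℂ) (gg φ (ω ^ k))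
        + gg φ (ω ^ k) * (starRingEnd ℂ) (gg φ (ω ^ (k+1)))
      = gg ψ (ω ^ (k+1)) * (starRingEnd ℂ) (gg ψ (ω ^ k))
        + gg ψ (ω ^ k) * (starRingEnd ℂ) (gg ψ (ω ^ (k+1))) := by
    intro k hk
    have hd := h2 k (by omega)
    have hcast : ((k : ℝ) + 1) = (((k+1 : ℕ)) : ℝ) := by push_cast; ring
    rw [hcast, ht φ (k+1), ht φ k, ht ψ (k+1), ht ψ k] at hd
    have hD := mulconj_eq hd
    rw [map_sub, map_sub] at hD
    have hA := habs1' (k+1) (by omega)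
    have hB := habs1' k (by omega)
    linear_combination hA + hB - hD
  -- polynomial identities
  have hdeg2 : ∀ (v w : Fin N → ℂ) (k l k' l' : ℕ),
      (PP N ω v k * SS N ω v l - PP N ω w k' * SS N ω w l').natDegree < Mn := by
    intro v w k l k' l'
    refine lt_of_le_of_lt (natDegree_sub_le _ _) ?_
    have b1 : (PP N ω v k * SS N ω v l).natDegree ≤ 2 * N - 2 := by
      refine natDegree_mul_le.trans ?_
      have c1 : (PP N ω v k).natDegree ≤ N - 1 := natDegree_PP_le
      have c2 : (SS N ω v l).natDegree ≤ N - 1 := natDegree_SS_le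
      omega
    have b2 : (PP N ω w k' * SS N ω w l').natDegree ≤ 2 * N - 2 := by
      refine natDegree_mul_le.trans ?_
      have c1 : (PP N ω w k').natDegree ≤ N - 1 := natDegree_PP_le
      have c2 : (SS N ω w l').natDegree ≤ N - 1 := natDegree_SS_le
      omega
    have : max (PP N ω v k * SS N ω v l).natDegree (PP N ω w k' * SS N ω w l').natDegree
        ≤ 2 * N - 2 := max_le b1 b2
    omega
  have E1 : PP N ω ψ 0 * SS N ω ψ 0 = PP N ω φ 0 * SS N ω φ 0 := by
    refine sub_eq_zero.1 (van hMn0 hprim (hdeg2 ψ φ 0 0 0 0) ?_)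
    intro k hk
    rw [eval_sub, eval_mul, eval_mul, eval_PP, eval_PP, eval_SS hcω, eval_SS hcω]
    simp only [zero_add]
    linear_combination (ω ^ (k * (N-1))) * (habs1 k hk).symm
  have E2 : PP N ω ψ 1 * SS N ω ψ 0 + PP N ω ψ 0 * SS N ω ψ 1
      = PP N ω φ 1 * SS N ω φ 0 + PP N ω φ 0 * SS N ω φ 1 := by
    have hvan := van hMn0 hprim
      (p := PP N ω ψ 1 * SS N ω ψ 0 + PP N ω ψ 0 * SS N ω ψ 1
        - (PP N ω φ 1 * SS N ω φ 0 + PP N ω φ 0 * SS N ω φ 1)) ?_ ?_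
    · linear_combination hvan
    · refine lt_of_le_of_lt (natDegree_sub_le _ _) ?_
      have b1 : ∀ (v : Fin N → ℂ) (k l : ℕ), (PP N ω v k * SS N ω v l).natDegree ≤ 2*N-2 := by
        intro v k l
        refine natDegree_mul_le.trans ?_
        have c1 : (PP N ω v k).natDegree ≤ N - 1 := natDegree_PP_le
        have c2 : (SS N ω v l).natDegree ≤ N - 1 := natDegree_SS_le
        omega
      have d1 := (natDegree_add_le _ _).trans (max_le (b1 ψ 1 0) (b1 ψ 0 1))
      have d2 := (natDegree_add_le _ _).trans (max_le (b1 φ 1 0) (b1 φ 0 1))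
      have : max (PP N ω ψ 1 * SS N ω ψ 0 + PP N ω ψ 0 * SS N ω ψ 1).natDegree
          (PP N ω φ 1 * SS N ω φ 0 + PP N ω φ 0 * SS N ω φ 1).natDegree ≤ 2*N-2 :=
        max_le d1 d2
      omega
    · intro k hk
      rw [eval_sub, eval_add, eval_add, eval_mul, eval_mul, eval_mul, eval_mul,
        eval_PP, eval_PP, eval_PP, eval_PP, eval_SS hcω, eval_SS hcω, eval_SS hcω,
        eval_SS hcω]
      simp only [zero_add, Nat.add_comm 1 k]
      linear_combination (ω ^ (k * (N-1))) * (hcross k hk).symm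
  have hCX : Polynomial.C (ω ^ (N-1)) ≠ 0 := by
    rw [Ne, Polynomial.C_eq_zero]
    exact pow_ne_zero _ hω0
  have E1' : PP N ω ψ 1 * SS N ω ψ 1 = PP N ω φ 1 * SS N ω φ 1 := by
    have hcomp := congrArg (fun p => p.comp (Polynomial.C ω * Polynomial.X)) E1
    simp only [mul_comp] at hcomp
    rw [comp_PP, comp_PP, comp_SS hcω, comp_SS hcω] at hcomp
    apply mul_left_cancel₀ hCX
    linear_combination hcomp
  have hpq : (PP N ω ψ 1 * SS N ω ψ 0 - PP N ω φ 1 * SS N ω φ 0)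
      * (PP N ω ψ 1 * SS N ω ψ 0 - PP N ω φ 0 * SS N ω φ 1) = 0 := by
    linear_combination (PP N ω ψ 1 * SS N ω ψ 0) * E2 - (PP N ω ψ 1 * SS N ω ψ 1) * E1
      - (PP N ω φ 0 * SS N ω φ 0) * E1'
  by_cases hφ : φ = 0
  · -- degenerate case
    have hPφ : PP N ω φ 0 = 0 := by
      rw [hφ, PP]
      simp
    have hψ0 : ψ = 0 := by
      by_contra hψ
      have := E1
      rw [hPφ, zero_mul] at this
      rcases mul_eq_zero.1 this with h | h
      · exact PP_ne_zero hω0 hψ 0 h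
      · exact SS_ne_zero hNpos hω0 hψ 0 h
    refine ⟨1, by simp, ?_⟩
    rw [hψ0, hφ]
    funext j
    simp
  have hψ : ψ ≠ 0 := by
    intro hψ0
    apply hφ
    have hPψ : PP N ω ψ 0 = 0 := by
      rw [hψ0, PP]
      simp
    have := E1.symm
    rw [hPψ, zero_mul] at this
    rcases mul_eq_zero.1 this with h | h
    · exact absurd h (PP_ne_zero hω0 hφ 0)
    · exact absurd h (SS_ne_zero hNpos hω0 hφ 0)
  obtain ⟨b0, hb0⟩ := Function.ne_iff.1 hφ
  simp only [Pi.zero_apply] at hb0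
  rcases mul_eq_zero.1 hpq with hc | hc
  · -- Case 1
    have hca : PP N ω ψ 1 * SS N ω ψ 0 = PP N ω φ 1 * SS N ω φ 0 := sub_eq_zero.1 hc
    have J1 : PP N ω ψ 1 * PP N ω φ 0 = PP N ω φ 1 * PP N ω ψ 0 := by
      apply mul_right_cancel₀ (mul_ne_zero (SS_ne_zero hNpos hω0 hψ 0) (SS_ne_zero hNpos hω0 hφ 0))
      linear_combination (PP N ω φ 0 * SS N ω φ 0) * hca - (PP N ω φ 1 * SS N ω φ 0) * E1
    have J : ∀ k : ℕ, PP N ω ψ k * PP N ω φ 0 = PP N ω φ k * PP N ω ψ 0 := by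
      intro k
      induction k with
      | zero => ring
      | succ k ih =>
        have hcomp := congrArg (fun p => p.comp (Polynomial.C ω * Polynomial.X)) ih
        simp only [mul_comp] at hcomp
        rw [comp_PP, comp_PP, comp_PP, comp_PP] at hcomp
        apply mul_right_cancel₀ (mul_ne_zero (PP_ne_zero hω0 hφ 1) (PP_ne_zero hω0 hψ 0))
        linear_combination (PP N ω φ 0 * PP N ω ψ 0) * hcomp
          + (PP N ω φ (k+1) * PP N ω ψ 0) * J1
    have hkey : ∀ a b : Fin N, ψ a * φ b = φ a * ψ b := by
      intro a b
      set m : ℕ := (a : ℕ) + (b : ℕ) with hm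
      have hmlt : m + 1 ≤ Mn := by
        have := a.2; have := b.2; omega
      set c : ℕ → ℂ := fun t => if t ≤ m then
          extN N ψ t * extN N φ (m - t) - extN N φ t * extN N ψ (m - t) else 0 with hcdef
      have hdft : ∀ k < Mn, ∑ t ∈ Finset.range Mn, c t * ω ^ (k * t) = 0 := by
        intro k hk
        have hcc := congrArg (fun p => p.coeff m) (J k)
        simp only [coeff_mul] at hcc
        rw [Finset.Nat.sum_antidiagonal_eq_sum_range_succ_mk,
          Finset.Nat.sum_antidiagonal_eq_sum_range_succ_mk] at hcc
        simp only [coeff_PP, Nat.zero_mul, pow_zero, mul_one] at hcc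
        have hstep : ∑ t ∈ Finset.range Mn, c t * ω ^ (k * t)
            = ∑ t ∈ Finset.range (m+1), c t * ω ^ (k * t) := by
          symm
          apply Finset.sum_subset (Finset.range_subset_range.2 hmlt)
          intro t _ ht
          have : ¬ t ≤ m := by
            simp only [Finset.mem_range] at ht
            omega
          rw [hcdef]
          simp only [this, if_false, zero_mul]
        rw [hstep]
        have hsplit : ∑ t ∈ Finset.range (m+1), c t * ω ^ (k * t)
            = (∑ t ∈ Finset.range (m+1), extN N ψ t * ω ^ (k*t) * extN N φ (m - t))
              - ∑ t ∈ Finset.range (m+1), extN N φ t * ω ^ (k*t) * extN N ψ (m - t) := by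
          rw [← Finset.sum_sub_distrib]
          refine Finset.sum_congr rfl (fun t htm => ?_)
          have : t ≤ m := by
            simp only [Finset.mem_range] at htm
            omega
          rw [hcdef]
          simp only [this, if_true]
          ring
        rw [hsplit, hcc, sub_self]
      have hca' := dft hMn0 hprim c hdft (a : ℕ) (by have := a.2; omega)
      rw [hcdef] at hca'
      simp only [show (a:ℕ) ≤ m by omega, if_true] at hca'
      have hma : m - (a:ℕ) = (b:ℕ) := by omega
      rw [hma, extN_coe, extN_coe, extN_coe, extN_coe] at hca'
      exact sub_eq_zero.1 hca'
    -- conclude case 1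
    set l : ℂ := ψ b0 / φ b0 with hldef
    have hψeq : ∀ a, ψ a = l * φ a := by
      intro a
      rw [hldef]
      field_simp [hb0]
      linear_combination hkey a b0
    have hnorm : (∑ j : Fin N, ψ j * (starRingEnd ℂ) (ψ j))
        = ∑ j : Fin N, φ j * (starRingEnd ℂ) (φ j) := by
      have hh := congrArg (fun p => p.coeff (N-1)) E1
      rw [coeffN1 hNpos ψ, coeffN1 hNpos φ] at hh
      exact hh
    have hsum : (∑ j : Fin N, φ j * (starRingEnd ℂ) (φ j))
        = ((∑ j : Fin N, Complex.normSq (φ j) : ℝ) : ℂ) := by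
      push_cast
      exact Finset.sum_congr rfl (fun j _ => Complex.mul_conj (φ j))
    have hsum_ne : (∑ j : Fin N, φ j * (starRingEnd ℂ) (φ j)) ≠ 0 := by
      rw [hsum]
      have hpos : 0 < ∑ j : Fin N, Complex.normSq (φ j) :=
        Finset.sum_pos' (fun j _ => Complex.normSq_nonneg _)
          ⟨b0, Finset.mem_univ _, Complex.normSq_pos.2 hb0⟩
      exact_mod_cast ne_of_gt hpos
    have hll : l * (starRingEnd ℂ) l = 1 := by
      have hexp : (∑ j : Fin N, ψ j * (starRingEnd ℂ) (ψ j))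
          = (l * (starRingEnd ℂ) l) * ∑ j : Fin N, φ j * (starRingEnd ℂ) (φ j) := by
        rw [Finset.mul_sum]
        refine Finset.sum_congr rfl (fun j _ => ?_)
        rw [hψeq j, map_mul]
        ring
      rw [hexp] at hnorm
      exact mul_right_cancel₀ hsum_ne (hnorm.trans (one_mul _).symm)
    exact ⟨l, abs_one_of_mul_conj hll, funext hψeq⟩
  · -- Case 2
    have hcb : PP N ω ψ 1 * SS N ω ψ 0 = PP N ω φ 0 * SS N ω φ 1 := sub_eq_zero.1 hc
    have hDψle : (PP N ω ψ 0).natDegree ≤ N - 1 := natDegree_PP_le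
    have hDφle : (PP N ω φ 0).natDegree ≤ N - 1 := natDegree_PP_le
    have hTψle : (PP N ω ψ 0).natTrailingDegree ≤ (PP N ω ψ 0).natDegree :=
      natTrailingDegree_le_natDegree _
    have hTφle : (PP N ω φ 0).natTrailingDegree ≤ (PP N ω φ 0).natDegree :=
      natTrailingDegree_le_natDegree _
    -- leading coefficients
    have hL := congrArg Polynomial.leadingCoeff hcb
    rw [Polynomial.leadingCoeff_mul, Polynomial.leadingCoeff_mul,
      leadingCoeff_PP hω0 hψ 1, leadingCoeff_SS hNpos hω0 hψ 0,
      leadingCoeff_PP hω0 hφ 0, leadingCoeff_SS hNpos hω0 hφ 1] at hL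
    simp only [one_mul, Nat.zero_mul, pow_zero, mul_one, map_mul] at hL
    have hE1L := congrArg Polynomial.leadingCoeff E1
    rw [Polynomial.leadingCoeff_mul, Polynomial.leadingCoeff_mul,
      leadingCoeff_PP hω0 hψ 0, leadingCoeff_SS hNpos hω0 hψ 0,
      leadingCoeff_PP hω0 hφ 0, leadingCoeff_SS hNpos hω0 hφ 0] at hE1L
    simp only [Nat.zero_mul, pow_zero, mul_one, map_mul] at hE1L
    have hA'B'ne : extN N φ ((PP N ω φ 0).natDegree)
        * (starRingEnd ℂ) (extN N φ ((PP N ω φ 0).natTrailingDegree)) ≠ 0 :=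
      mul_ne_zero (extN_D_ne hω0 hφ) (conj_ne' (extN_T_ne hω0 hφ))
    have hkey1 : (extN N φ ((PP N ω φ 0).natDegree)
          * (starRingEnd ℂ) (extN N φ ((PP N ω φ 0).natTrailingDegree)))
        * ω ^ ((PP N ω ψ 0).natDegree + (PP N ω φ 0).natTrailingDegree)
        = (extN N φ ((PP N ω φ 0).natDegree)
          * (starRingEnd ℂ) (extN N φ ((PP N ω φ 0).natTrailingDegree))) * 1 := by
      rw [pow_add]
      linear_combination (ω ^ ((PP N ω φ 0).natTrailingDegree)) * hL
        - (ω ^ ((PP N ω ψ 0).natDegree) * ω ^ ((PP N ω φ 0).natTrailingDegree)) * hE1L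
        + (extN N φ ((PP N ω φ 0).natDegree)
            * (starRingEnd ℂ) (extN N φ ((PP N ω φ 0).natTrailingDegree)))
          * (pow_conj_cancel hcω ((PP N ω φ 0).natTrailingDegree))
    have h10 : ω ^ ((PP N ω ψ 0).natDegree + (PP N ω φ 0).natTrailingDegree) = 1 := by
      have := mul_left_cancel₀ hA'B'ne hkey1
      rw [this]
    have hDT1 : (PP N ω ψ 0).natDegree + (PP N ω φ 0).natTrailingDegree = 0 :=
      Nat.eq_zero_of_dvd_of_lt ((hprim.pow_eq_one_iff_dvd _).1 h10) (by omega)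
    -- trailing coefficients
    have hTr := congrArg Polynomial.trailingCoeff hcb
    rw [Polynomial.trailingCoeff_mul, Polynomial.trailingCoeff_mul,
      trailingCoeff_PP hω0 hψ 1, trailingCoeff_SS hNpos hω0 hψ 0,
      trailingCoeff_PP hω0 hφ 0, trailingCoeff_SS hNpos hω0 hφ 1] at hTr
    simp only [one_mul, Nat.zero_mul, pow_zero, mul_one, map_mul] at hTr
    have hE1T := congrArg Polynomial.trailingCoeff E1
    rw [Polynomial.trailingCoeff_mul, Polynomial.trailingCoeff_mul,
      trailingCoeff_PP hω0 hψ 0, trailingCoeff_SS hNpos hω0 hψ 0,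
      trailingCoeff_PP hω0 hφ 0, trailingCoeff_SS hNpos hω0 hφ 0] at hE1T
    simp only [Nat.zero_mul, pow_zero, mul_one, map_mul] at hE1T
    have hB'ne : extN N φ ((PP N ω φ 0).natTrailingDegree)
        * (starRingEnd ℂ) (extN N φ ((PP N ω φ 0).natDegree)) ≠ 0 :=
      mul_ne_zero (extN_T_ne hω0 hφ) (conj_ne' (extN_D_ne hω0 hφ))
    have hkey2 : (extN N φ ((PP N ω φ 0).natTrailingDegree)
          * (starRingEnd ℂ) (extN N φ ((PP N ω φ 0).natDegree)))
        * ω ^ ((PP N ω ψ 0).natTrailingDegree + (PP N ω φ 0).natDegree)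
        = (extN N φ ((PP N ω φ 0).natTrailingDegree)
          * (starRingEnd ℂ) (extN N φ ((PP N ω φ 0).natDegree))) * 1 := by
      rw [pow_add]
      linear_combination (ω ^ ((PP N ω φ 0).natDegree)) * hTr
        - (ω ^ ((PP N ω ψ 0).natTrailingDegree) * ω ^ ((PP N ω φ 0).natDegree)) * hE1T
        + (extN N φ ((PP N ω φ 0).natTrailingDegree)
            * (starRingEnd ℂ) (extN N φ ((PP N ω φ 0).natDegree)))
          * (pow_conj_cancel hcω ((PP N ω φ 0).natDegree))
    have h20 : ω ^ ((PP N ω ψ 0).natTrailingDegree + (PP N ω φ 0).natDegree) = 1 := by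
      have := mul_left_cancel₀ hB'ne hkey2
      rw [this]
    have hDT2 : (PP N ω ψ 0).natTrailingDegree + (PP N ω φ 0).natDegree = 0 :=
      Nat.eq_zero_of_dvd_of_lt ((hprim.pow_eq_one_iff_dvd _).1 h20) (by omega)
    have hDψ0 : (PP N ω ψ 0).natDegree = 0 := by omega
    have hDφ0 : (PP N ω φ 0).natDegree = 0 := by omega
    have hTψ0 : (PP N ω ψ 0).natTrailingDegree = 0 := by omega
    have hTφ0 : (PP N ω φ 0).natTrailingDegree = 0 := by omega
    -- vectors are concentrated at index 0
    have hφj : ∀ j : Fin N, (j : ℕ) ≠ 0 → φ j = 0 := by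
      intro j hj
      rw [← extN_coe (v := φ) j, ← coeff_PP0 (ω := ω)]
      exact Polynomial.coeff_eq_zero_of_natDegree_lt (by omega)
    have hψj : ∀ j : Fin N, (j : ℕ) ≠ 0 → ψ j = 0 := by
      intro j hj
      rw [← extN_coe (v := ψ) j, ← coeff_PP0 (ω := ω)]
      exact Polynomial.coeff_eq_zero_of_natDegree_lt (by omega)
    set z : Fin N := ⟨0, hNpos⟩ with hzdef
    have hb0z : b0 = z := by
      by_contra hne
      apply hb0
      apply hφj
      intro hb0c
      exact hne (Fin.ext (by rw [hb0c, hzdef]))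
    have hφz : φ z ≠ 0 := hb0z ▸ hb0
    have hext0ψ : extN N ψ 0 = ψ z := by
      rw [extN]
      rw [dif_pos hNpos]
    have hext0φ : extN N φ 0 = φ z := by
      rw [extN]
      rw [dif_pos hNpos]
    rw [hDψ0, hTψ0, hDφ0, hTφ0, hext0ψ, hext0φ] at hE1L
    set l : ℂ := ψ z / φ z with hldef
    have hll : l * (starRingEnd ℂ) l = 1 := by
      rw [hldef, map_div₀, div_mul_div_comm, hE1L, div_self (mul_ne_zero hφz (conj_ne' hφz))]
    refine ⟨l, abs_one_of_mul_conj hll, ?_⟩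
    funext j
    by_cases hj : (j : ℕ) = 0
    · have : j = z := Fin.ext (by rw [hj, hzdef])
      rw [this, hldef]
      field_simp
    · rw [hψj j hj, hφj j hj, mul_zero]
end

section
/- Let N = 2m+1 be an odd integer with N ≥ 3. Then there exist φ, ψ ∈ ℂ^N such that for every k = 0, 1, …, 2N−3: |P_φ(k/(2N−2))| = |P_ψ(k/(2N−2))| and |P_φ(k/(2N−2)) − P_φ((k−1)/(2N−2))| = |P_ψ(k/(2N−2)) − P_ψ((k−1)/(2N−2))|, and yet there is no λ ∈ ℂ with |λ| = 1 and ψ = λ·φ. -/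
open Real

lemma trigPoly_two {N : ℕ} (hN : 2 ≤ N) (a b : ℂ) (x : ℝ) :
    trigPoly (fun j : Fin N => if (j : ℕ) = 0 then a else if (j : ℕ) = N - 1 then b else 0) x
      = a + b * Complex.exp (2 * Real.pi * Complex.I * ((N - 1 : ℕ) : ℂ) * (x : ℂ)) := by
  have h0 : 0 < N := by omega
  have hlt : N - 1 < N := by omega
  set i0 : Fin N := ⟨0, h0⟩ with hi0
  set i1 : Fin N := ⟨N - 1, hlt⟩ with hi1
  have hne : i0 ≠ i1 := by
    simp only [hi0, hi1, ne_eq, Fin.mk.injEq]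
    omega
  unfold trigPoly
  have hsplit : ∀ j : Fin N,
      (if (j : ℕ) = 0 then a else if (j : ℕ) = N - 1 then b else 0) *
          Complex.exp (2 * Real.pi * Complex.I * (j : ℕ) * x)
        = (if j = i0 then a * Complex.exp (2 * Real.pi * Complex.I * ((i0 : ℕ) : ℂ) * x) else 0)
          + (if j = i1 then b * Complex.exp (2 * Real.pi * Complex.I * ((i1 : ℕ) : ℂ) * x) else 0) := by
    intro j
    rcases eq_or_ne j i0 with h | h
    · subst h
      have : ¬ ((0 : ℕ) = N - 1) := by omega
      simp [hne, hi0, hi1, this]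
    · rcases eq_or_ne j i1 with h' | h'
      · subst h'
        have hv : (i1 : ℕ) = N - 1 := rfl
        have : ¬ ((N - 1 : ℕ) = 0) := by omega
        simp [h, hv, this]
      · have hv0 : (j : ℕ) ≠ 0 := by
          intro hc; exact h (Fin.ext hc)
        have hv1 : (j : ℕ) ≠ N - 1 := by
          intro hc; exact h' (Fin.ext hc)
        simp [hv0, hv1, h, h']
  rw [Finset.sum_congr rfl (fun j _ => hsplit j), Finset.sum_add_distrib]
  simp
  exact Or.inl rfl

theorem undersampled_discrete_deriv_counterexample
    (N m : ℕ) (hNm : N = 2 * m + 1) (hN : 3 ≤ N) :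
    ∃ φ ψ : Fin N → ℂ,
      (∀ k : ℕ, k ≤ 2 * N - 3 →
        ‖trigPoly φ (k / (2 * N - 2))‖
          = ‖trigPoly ψ (k / (2 * N - 2))‖) ∧
      (∀ k : ℕ, k ≤ 2 * N - 3 →
        ‖trigPoly φ (k / (2 * N - 2)) - trigPoly φ (((k : ℝ) - 1) / (2 * N - 2))‖
          = ‖trigPoly ψ (k / (2 * N - 2)) - trigPoly ψ (((k : ℝ) - 1) / (2 * N - 2))‖) ∧
      ¬ ∃ l : ℂ, ‖l‖ = 1 ∧ ψ = fun j => l * φ j := by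
  have hN2 : 2 ≤ N := by omega
  -- denominator is nonzero
  have hden : (2 * (N : ℂ) - 2) ≠ 0 := by
    intro h
    have : (N : ℂ) = 1 := by linear_combination h / 2
    have : N = 1 := by exact_mod_cast this
    omega
  -- general evaluation of the exponent
  have hexp : ∀ r : ℝ,
      Complex.exp (2 * Real.pi * Complex.I * ((N - 1 : ℕ) : ℂ) * ((r / (2 * (N : ℝ) - 2) : ℝ) : ℂ))
        = Complex.exp ((Real.pi : ℂ) * Complex.I * (r : ℂ)) := by
    intro r
    congr 1
    have hNc : ((N - 1 : ℕ) : ℂ) = (N : ℂ) - 1 := by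
      push_cast [Nat.cast_sub (by omega : 1 ≤ N)]
      ring
    rw [hNc]
    push_cast
    have hN1 : (N : ℂ) - 1 ≠ 0 := fun h => hden (by linear_combination 2 * h)
    field_simp
  -- value of the exponential at the sample points
  have hek : ∀ k : ℕ, Complex.exp ((Real.pi : ℂ) * Complex.I * (((k : ℝ) : ℂ))) = (-1 : ℂ) ^ k := by
    intro k
    rw [show (Real.pi : ℂ) * Complex.I * (((k : ℝ) : ℂ)) = (k : ℕ) * (Real.pi * Complex.I) by
      push_cast; ring]
    rw [Complex.exp_nat_mul, Complex.exp_pi_mul_I]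
  have hek' : ∀ k : ℕ,
      Complex.exp ((Real.pi : ℂ) * Complex.I * ((((k : ℝ) - 1 : ℝ)) : ℂ)) = -(-1 : ℂ) ^ k := by
    intro k
    rw [show (Real.pi : ℂ) * Complex.I * ((((k : ℝ) - 1 : ℝ)) : ℂ)
        = (Real.pi : ℂ) * Complex.I * (((k : ℝ) : ℂ)) - (Real.pi : ℂ) * Complex.I by
      push_cast; ring]
    rw [Complex.exp_sub, hek k, Complex.exp_pi_mul_I]
    simp [div_neg]
  -- values of the trig polynomials at the sample points
  have hval : ∀ (b : ℂ) (k : ℕ),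
      trigPoly (fun j : Fin N => if (j : ℕ) = 0 then 1 else if (j : ℕ) = N - 1 then b else 0)
          ((k : ℝ) / (2 * (N : ℝ) - 2)) = 1 + b * (-1 : ℂ) ^ k := by
    intro b k
    rw [trigPoly_two hN2, hexp, hek]
  have hval' : ∀ (b : ℂ) (k : ℕ),
      trigPoly (fun j : Fin N => if (j : ℕ) = 0 then 1 else if (j : ℕ) = N - 1 then b else 0)
          (((k : ℝ) - 1) / (2 * (N : ℝ) - 2)) = 1 - b * (-1 : ℂ) ^ k := by
    intro b k
    rw [trigPoly_two hN2, hexp, hek']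
    ring
  refine ⟨fun j : Fin N => if (j : ℕ) = 0 then 1 else if (j : ℕ) = N - 1 then Complex.I else 0,
    fun j : Fin N => if (j : ℕ) = 0 then 1 else if (j : ℕ) = N - 1 then -Complex.I else 0,
    ?_, ?_, ?_⟩
  · intro k _
    rw [hval, hval]
    have hc : (1 + (-Complex.I) * (-1 : ℂ) ^ k)
        = starRingEnd ℂ (1 + Complex.I * (-1 : ℂ) ^ k) := by
      simp
    rw [hc, Complex.norm_conj]
  · intro k _
    rw [hval, hval, hval', hval']
    rw [show (1 + (-Complex.I) * (-1 : ℂ) ^ k) - (1 - (-Complex.I) * (-1 : ℂ) ^ k)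
        = -((1 + Complex.I * (-1 : ℂ) ^ k) - (1 - Complex.I * (-1 : ℂ) ^ k)) by ring]
    rw [norm_neg]
  · rintro ⟨l, _, h⟩
    have h0 : 0 < N := by omega
    have hlt : N - 1 < N := by omega
    have e0 := congrFun h ⟨0, h0⟩
    have e1 := congrFun h ⟨N - 1, hlt⟩
    have hn1 : ¬ ((N - 1 : ℕ) = 0) := by omega
    simp [hn1] at e0 e1
    rw [← e0] at e1
    have : Complex.I = 0 := by linear_combination (-1/2 : ℂ) * e1
    exact Complex.I_ne_zero this
end

section
/- Let (e_k)_{k∈ℕ} be an orthonormal (Hilbert) basis of L²(ℝ). If φ, ψ ∈ L²(ℝ) satisfy |⟨e_k, φ⟩| = |⟨e_k, ψ⟩| for every k ∈ ℕ, |⟨e_k + e_ℓ, φ⟩| = |⟨e_k + e_ℓ, ψ⟩| for all k ≠ ℓ, and |⟨e_k + i·e_ℓ, φ⟩| = |⟨e_k + i·e_ℓ, ψ⟩| for all k ≠ ℓ, then there exists c ∈ ℂ with |c| = 1 such that ψ = c·φ. In other words, the family of rank-one orthogonal projections onto the lines spanned by e_k, e_k + e_ℓ and e_k + i·e_ℓ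 does phase retrieval on L²(ℝ). -/
open MeasureTheory

set_option maxHeartbeats 1000000 in
open Complex in
private lemma key (a a' b b' : ℂ) (h1 : ‖a‖ = ‖b‖) (h2 : ‖a'‖ = ‖b'‖)
    (h3 : ‖a + a'‖ = ‖b + b'‖) (h4 : ‖a - Complex.I * a'‖ = ‖b - Complex.I * b'‖) :
    (starRingEnd ℂ) a * a' = (starRingEnd ℂ) b * b' := by
  have sq : ∀ z w : ℂ, ‖z‖ = ‖w‖ → z.re^2 + z.im^2 = w.re^2 + w.im^2 := by
    intro z w h
    have h2 : Complex.normSq z = Complex.normSq w := by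
      rw [← Complex.sq_norm, ← Complex.sq_norm, h]
    simpa [normSq_apply, pow_two] using h2
  have n1 := sq _ _ h1
  have n2 := sq _ _ h2
  have n3 := sq _ _ h3
  have n4 := sq _ _ h4
  simp only [add_re, add_im, sub_re, sub_im, mul_re, mul_im,
    Complex.I_re, Complex.I_im, zero_mul, one_mul, zero_sub, sub_zero] at n3 n4
  apply Complex.ext <;>
    simp only [mul_re, mul_im, conj_re, conj_im] <;> nlinarith [n1, n2, n3, n4]

theorem rank_one_projections_do_phase_retrieval
    (e : HilbertBasis ℕ ℂ (Lp ℂ 2 (volume : Measure ℝ)))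
    (φ ψ : Lp ℂ 2 (volume : Measure ℝ))
    (h1 : ∀ k : ℕ, ‖(inner ℂ (e k) φ : ℂ)‖ = ‖(inner ℂ (e k) ψ : ℂ)‖)
    (h2 : ∀ k l : ℕ, k ≠ l →
      ‖(inner ℂ (e k + e l) φ : ℂ)‖ = ‖(inner ℂ (e k + e l) ψ : ℂ)‖)
    (h3 : ∀ k l : ℕ, k ≠ l →
      ‖(inner ℂ (e k + Complex.I • e l) φ : ℂ)‖ = ‖(inner ℂ (e k + Complex.I • e l) ψ : ℂ)‖) :
    ∃ c : ℂ, ‖c‖ = 1 ∧ ψ = c • φ := by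
  let a : ℕ → ℂ := fun k => inner ℂ (e k) φ
  let b : ℕ → ℂ := fun k => inner ℂ (e k) ψ
  have h1' : ∀ k, ‖a k‖ = ‖b k‖ := h1
  have coeff : ∀ c : ℂ, (∀ k, b k = c * a k) → ψ = c • φ := by
    intro c h
    apply e.repr.injective
    ext k
    simp only [_root_.map_smul, lp.coeFn_smul, Pi.smul_apply,
      HilbertBasis.repr_apply_apply, smul_eq_mul]
    exact h k
  have keykl : ∀ k l : ℕ, k ≠ l →
      (starRingEnd ℂ) (a k) * a l = (starRingEnd ℂ) (b k) * b l := by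
    intro k l hkl
    apply key
    · exact h1' k
    · exact h1' l
    · simpa [inner_add_left] using h2 k l hkl
    · have := h3 k l hkl
      simpa [inner_add_left, inner_smul_left, Complex.conj_I, neg_mul, sub_eq_add_neg]
        using this
  by_cases hφ : ∀ k, a k = 0
  · refine ⟨1, by simp, coeff 1 fun k => ?_⟩
    have : ‖b k‖ = 0 := by rw [← h1' k, hφ k, norm_zero]
    simp [norm_eq_zero.mp this, hφ k]
  · push_neg at hφ
    obtain ⟨k0, hk0⟩ := hφ
    have hb0 : b k0 ≠ 0 := by
      intro h
      apply hk0
      have := h1' k0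
      rw [h, norm_zero, norm_eq_zero] at this
      exact this
    refine ⟨(starRingEnd ℂ) (a k0) / (starRingEnd ℂ) (b k0), ?_, coeff _ fun l => ?_⟩
    · rw [norm_div, Complex.norm_conj, Complex.norm_conj,
        h1' k0, div_self (norm_ne_zero_iff.mpr hb0)]
    · have hbc0 : (starRingEnd ℂ) (b k0) ≠ 0 := by simpa using hb0
      by_cases hl : l = k0
      · subst hl
        have hn : (starRingEnd ℂ) (a l) * a l = (starRingEnd ℂ) (b l) * b l := by
          rw [mul_comm, mul_comm ((starRingEnd ℂ) (b l)), Complex.mul_conj, Complex.mul_conj]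
          norm_cast
          rw [← Complex.sq_norm, ← Complex.sq_norm,
            h1' l]
        field_simp
        linear_combination -hn
      · have hk := keykl k0 l (fun h => hl h.symm)
        field_simp
        linear_combination -hk
end
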